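/- arXiv:1410.0297 — 2 statements merged into one kernel-verified Lean document; each statement's English description precedes it below -/
import Mathlib

section
/- Let c and b be odd integers with 1 ≤ c ≤ 9 and 3 ≤ b ≤ 9. Then every finite nonempty set of positive integers is [c,b]-cycle-good. -/
set_option maxRecDepth 100000


/-- The augmented generalized happy function `S_{[c,b]}`: it maps `a` to `c` plus the
sum of the squares of the base-`b` digits of `a`. -/
def S (c b a : ℕ) : ℕ := c + ((Nat.digits b a).map (· ^ 2)).sum


/-- A finite set `T` of positive integers is `[c,b]`-cycle-good if for each cycle of
`S_{[c,b]}` (the orbit of a positive periodic point `u`), there exist `n, k ≥ 1` such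
that `S_{[c,b]}^k (t + n)` lies in that cycle for all `t ∈ T`. -/
def CycleGood (c b : ℕ) (T : Finset ℕ) : Prop :=
  ∀ u, 0 < u → (∃ m, 0 < m ∧ (S c b)^[m] u = u) →
    ∃ n k : ℕ, 0 < n ∧ 0 < k ∧ ∀ t ∈ T, ∃ j : ℕ, (S c b)^[k] (t + n) = (S c b)^[j] u


namespace AGH

def fA (b : ℕ) : ℕ → ℕ → ℕ
  | 0, _ => 0
  | _+1, 0 => 0
  | fuel+1, a+1 => ((a+1) % b)^2 + fA b fuel ((a+1)/b)

def fb (b a : ℕ) : ℕ := fA b a a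

def Fb (c b x : ℕ) : ℕ := c + fb b x

def repu (b : ℕ) : ℕ → ℕ
  | 0 => 0
  | s+1 => 1 + b * repu b s

lemma fA_zero (b fuel : ℕ) : fA b fuel 0 = 0 := by cases fuel <;> rfl

lemma fA_fuel (b : ℕ) (hb : 2 ≤ b) : ∀ fuel, ∀ a ≤ fuel, fA b fuel a = fb b a := by
  intro fuel
  induction fuel using Nat.strong_induction_on with
  | _ fuel ih =>
    intro a ha
    match fuel, a with
    | 0, a =>
      have : a = 0 := by omega
      subst this; rfl
    | n+1, 0 => simp [fA_zero, fb]
    | n+1, a'+1 =>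
      have hd : (a'+1)/b ≤ a' :=
        Nat.lt_succ_iff.mp (Nat.div_lt_self (Nat.succ_pos _) hb)
      have ha' : a' ≤ n := Nat.succ_le_succ_iff.mp ha
      have h1 : fA b n ((a'+1)/b) = fb b ((a'+1)/b) := by
        rcases Nat.eq_or_lt_of_le (Nat.le_trans hd ha') with h | h
        · subst h; rfl
        · have := ih n (Nat.lt_succ_self n) _ (le_of_lt h)
          -- careful: need (a'+1)/b ≤ n
          exact ih n (Nat.lt_succ_self n) _ (Nat.le_trans hd ha')
      have h2 : fA b a' ((a'+1)/b) = fb b ((a'+1)/b) :=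
        ih a' (by omega) _ hd
      show ((a'+1) % b)^2 + fA b n ((a'+1)/b) = fb b (a'+1)
      rw [h1]
      show _ = ((a'+1) % b)^2 + fA b a' ((a'+1)/b)
      rw [h2]

lemma fb_zero (b : ℕ) : fb b 0 = 0 := rfl

lemma fb_eq (b : ℕ) (hb : 2 ≤ b) (a : ℕ) (ha : 1 ≤ a) :
    fb b a = (a % b)^2 + fb b (a / b) := by
  obtain ⟨a', rfl⟩ : ∃ a', a = a' + 1 := ⟨a - 1, by omega⟩
  show ((a'+1) % b)^2 + fA b a' ((a'+1)/b) = _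
  rw [fA_fuel b hb a' _ (Nat.lt_succ_iff.mp (Nat.div_lt_self (Nat.succ_pos _) hb))]

lemma S_eq_Fb (c b : ℕ) (hb : 2 ≤ b) : S c b = Fb c b := by
  funext a
  unfold S Fb
  congr 1
  induction a using Nat.strong_induction_on with
  | _ a ih =>
    rcases Nat.eq_zero_or_pos a with rfl | ha
    · simp [fb_zero]
    · rw [Nat.digits_def' (by omega : 1 < b) ha]
      simp only [List.map_cons, List.sum_cons]
      rw [ih (a / b) (Nat.div_lt_self ha (by omega)), fb_eq b hb a ha]

lemma fb_split (b : ℕ) (hb : 2 ≤ b) :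
    ∀ M a z, a < b ^ M → fb b (a + b ^ M * z) = fb b a + fb b z := by
  intro M
  induction M with
  | zero =>
    intro a z ha
    have : a = 0 := by simpa using ha
    subst this
    simp [fb_zero]
  | succ M ih =>
    intro a z ha
    rcases Nat.eq_zero_or_pos z with rfl | hz
    · simp [fb_zero]
    · have hpow : 1 ≤ b ^ (M+1) := Nat.one_le_pow _ _ (by omega)
      have hx : 1 ≤ a + b ^ (M+1) * z := by nlinarith
      have hb0 : 0 < b := by omega
      have hrw : a + b ^ (M+1) * z = a + b * (b ^ M * z) := by ring
      rw [hrw, fb_eq b hb _ (by omega)]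
      rw [Nat.add_mul_mod_self_left, Nat.add_mul_div_left _ _ hb0]
      have hdiv : a / b < b ^ M := by
        rw [Nat.div_lt_iff_lt_mul hb0]
        calc a < b ^ (M+1) := ha
        _ = b ^ M * b := by ring
      rw [ih _ _ hdiv]
      rcases Nat.eq_zero_or_pos a with rfl | ha1
      · simp [fb_zero]
      · rw [fb_eq b hb a ha1]; ring

lemma fb_repu (b : ℕ) (hb : 2 ≤ b) (s : ℕ) : fb b (repu b s) = s := by
  induction s with
  | zero => rfl
  | succ s ih =>
    show fb b (1 + b * repu b s) = s + 1
    have h1 : 1 + b * repu b s = 1 + b ^ 1 * repu b s := by ring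
    rw [h1, fb_split b hb 1 1 (repu b s) (by simpa using by omega : 1 < b ^ 1), ih]
    have : fb b 1 = 1 := by
      rw [fb_eq b hb 1 le_rfl, Nat.mod_eq_of_lt (by omega), Nat.div_eq_of_lt (by omega)]
      simp [fb_zero]
    rw [this]; ring

lemma repu_pos (b s : ℕ) (hs : 1 ≤ s) : 1 ≤ repu b s := by
  obtain ⟨s', rfl⟩ : ∃ s', s = s' + 1 := ⟨s - 1, by omega⟩
  show 1 ≤ 1 + b * repu b s'
  omega

lemma fb_bound (b : ℕ) (hb : 2 ≤ b) : ∀ L a, a < b ^ L → fb b a ≤ L * (b-1)^2 := by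
  intro L
  induction L with
  | zero =>
    intro a ha
    have : a = 0 := by simpa using ha
    subst this; simp [fb_zero]
  | succ L ih =>
    intro a ha
    rcases Nat.eq_zero_or_pos a with rfl | ha1
    · simp [fb_zero]
    · rw [fb_eq b hb a ha1]
      have h1 : a % b ≤ b - 1 := by have := Nat.mod_lt a (show 0 < b by omega); omega
      have h2 : (a % b)^2 ≤ (b-1)^2 := Nat.pow_le_pow_left h1 2
      have hdiv : a / b < b ^ L := by
        rw [Nat.div_lt_iff_lt_mul (by omega : 0 < b)]
        calc a < b ^ (L+1) := ha
        _ = b ^ L * b := by ring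
      have := ih _ hdiv
      calc (a % b)^2 + fb b (a / b) ≤ (b-1)^2 + L * (b-1)^2 := by omega
      _ = (L+1) * (b-1)^2 := by ring

lemma fb_pos (b : ℕ) (hb : 2 ≤ b) : ∀ a, 1 ≤ a → 1 ≤ fb b a := by
  intro a
  induction a using Nat.strong_induction_on with
  | _ a ih =>
    intro ha
    rw [fb_eq b hb a ha]
    have hdm := Nat.div_add_mod a b
    rcases Nat.eq_zero_or_pos (a % b) with h | h
    · have hq : 1 ≤ a / b := by
        rcases Nat.eq_zero_or_pos (a / b) with h0 | h0
        · rw [h0, Nat.mul_zero] at hdm; omega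
        · exact h0
      have := ih (a / b) (Nat.div_lt_self ha (by omega)) hq
      omega
    · have : 1 ≤ (a % b)^2 := Nat.one_le_pow _ _ h
      omega
  

lemma contract3 (b : ℕ) (hb : 2 ≤ b) (hnum : 9 + 4*(b-1)^2 < b^3) :
    ∀ x, b^3 ≤ x → 9 + fb b x < x := by
  intro x
  induction x using Nat.strong_induction_on with
  | _ x ih =>
    intro hx
    have hx1 : 1 ≤ x := le_trans (Nat.one_le_pow _ _ (by omega)) hx
    rcases lt_or_ge x (b^4) with h4 | h4
    · have := fb_bound b hb 4 x h4
      omega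
    · have hq : b^3 ≤ x / b := by
        rw [Nat.le_div_iff_mul_le (by omega : 0 < b)]
        calc b^3 * b = b^4 := by ring
        _ ≤ x := h4
      have hqx : x / b < x := Nat.div_lt_self hx1 (by omega)
      have hIH := ih (x / b) hqx hq
      rw [fb_eq b hb x hx1]
      have h1 : x % b ≤ b - 1 := by have := Nat.mod_lt x (show 0 < b by omega); omega
      have h2 : (x % b)^2 ≤ (b-1)^2 := Nat.pow_le_pow_left h1 2
      have h3 : (b-1)^2 ≤ (b-1) * (x / b) := by
        have hb1 : b - 1 ≤ x / b := le_trans (by nlinarith [Nat.one_le_pow 3 b (show 0 < b by omega)] : b - 1 ≤ b ^ 3) hq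
        calc (b-1)^2 = (b-1)*(b-1) := by ring
        _ ≤ (b-1) * (x/b) := Nat.mul_le_mul_left _ hb1
      have h5' : b * (x / b) ≤ x := by
        rw [Nat.mul_comm]
        exact Nat.div_mul_le_self x b
      have hbq : (b-1) * (x/b) + (x/b) = b * (x/b) := by
        have : b - 1 + 1 = b := by omega
        calc (b-1) * (x/b) + (x/b) = ((b-1)+1) * (x/b) := by ring
        _ = b * (x/b) := by rw [this]
      omega

def Vp (c b u x : ℕ) : Prop := ∃ k j, (Fb c b)^[k] x = (Fb c b)^[j] u

lemma Vp_self (c b u : ℕ) : Vp c b u u := ⟨0, 0, rfl⟩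

lemma Vp_succ (c b u x : ℕ) (h : Vp c b u (Fb c b x)) : Vp c b u x := by
  obtain ⟨k, j, hk⟩ := h
  exact ⟨k + 1, j, by rw [Function.iterate_succ_apply]; exact hk⟩

def Vgood (c b u : ℕ) (G : Finset ℕ) : Prop :=
  ∃ A, 1 ≤ A ∧ ∀ g ∈ G, Vp c b u (c + g + A)

lemma step (c b u : ℕ) (hb : 2 ≤ b) (G : Finset ℕ) (w β : ℕ) (hβ : ∀ g ∈ G, β ≤ g)
    (h : Vgood c b u (G.image fun g => fb b (w + g - β))) : Vgood c b u G := by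
  obtain ⟨A', hA', hall⟩ := h
  set M := w + β + c + G.sup id + 1 with hM
  have hMpow : M < b ^ M := Nat.lt_pow_self (by omega : 1 < b)
  have hMbound : ∀ g ∈ G, w + g - β < b ^ M := by
    intro g hg
    have : g ≤ G.sup id := Finset.le_sup (f := id) hg
    omega
  set Z := b ^ M * repu b A' with hZ
  have hZ1 : b ^ M ≤ Z := Nat.le_mul_of_pos_right _ (repu_pos b A' hA')
  have hZbig : β + c + 1 ≤ Z := by omega
  refine ⟨w + Z - (β + c), by omega, ?_⟩
  intro g hg
  have hgβ := hβ g hg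
  have key : c + g + (w + Z - (β + c)) = (w + g - β) + Z := by omega
  rw [key]
  apply Vp_succ
  have hF : Fb c b ((w + g - β) + Z) = c + (fb b (w + g - β) + A') := by
    unfold Fb
    rw [hZ, fb_split b hb M _ _ (hMbound g hg), fb_repu b hb]
  rw [hF]
  have := hall _ (Finset.mem_image_of_mem _ hg)
  rwa [Nat.add_assoc] at this

lemma fin1 (c b u : ℕ) (hb : 2 ≤ b) (hu : c + 1 ≤ u) (g : ℕ) :
    Vgood c b u {g} := by
  set M := c + g + 1 with hM
  have hMpow : M < b ^ M := Nat.lt_pow_self (by omega : 1 < b)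
  set E := b ^ M * repu b (u - c) with hE
  have hE1 : b ^ M ≤ E := Nat.le_mul_of_pos_right _ (repu_pos b _ (by omega))
  refine ⟨E - (c + g), by omega, ?_⟩
  intro g' hg'
  rw [Finset.mem_singleton] at hg'
  rw [hg']
  have key : c + g + (E - (c + g)) = 0 + E := by omega
  rw [key]
  apply Vp_succ
  have : Fb c b (0 + E) = u := by
    unfold Fb
    rw [hE, fb_split b hb M 0 _ (Nat.one_le_pow _ _ (by omega)), fb_zero, fb_repu b hb]
    omega
  rw [this]
  exact Vp_self c b u

def CertOne (c b u : ℕ) : Prop :=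
  ∃ w s, 1 ≤ s ∧ Vp c b u (c + (s + fb b w)) ∧ Vp c b u (c + (s + fb b (w+1)))

lemma finpair (c b u : ℕ) (hb : 2 ≤ b) (hcert : CertOne c b u) (p : ℕ) :
    Vgood c b u {p, p + 1} := by
  obtain ⟨w, s, hs, h0, h1⟩ := hcert
  set M := w + p + c + 2 with hM
  have hMpow : M < b ^ M := Nat.lt_pow_self (by omega : 1 < b)
  set Z := b ^ M * repu b s with hZ
  have hZ1 : b ^ M ≤ Z := Nat.le_mul_of_pos_right _ (repu_pos b s hs)
  refine ⟨w + Z - (p + c), by omega, ?_⟩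
  intro g hg
  obtain hgp | hg := Finset.mem_insert.mp hg
  · rw [hgp]
    have key : c + p + (w + Z - (p + c)) = w + Z := by omega
    rw [key]
    apply Vp_succ
    have : Fb c b (w + Z) = c + (fb b w + s) := by
      unfold Fb
      rw [hZ, fb_split b hb M w _ (by omega), fb_repu b hb]
    rw [this]
    have : c + (fb b w + s) = c + (s + fb b w) := by ring
    rw [this]; exact h0
  · rw [Finset.mem_singleton] at hg
    rw [hg]
    have key : c + (p + 1) + (w + Z - (p + c)) = (w + 1) + Z := by omega
    rw [key]
    apply Vp_succ
    have : Fb c b ((w + 1) + Z) = c + (fb b (w+1) + s) := by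
      unfold Fb
      rw [hZ, fb_split b hb M (w+1) _ (by omega), fb_repu b hb]
    rw [this]
    have : c + (fb b (w+1) + s) = c + (s + fb b (w+1)) := by ring
    rw [this]; exact h1

def nextE (b : ℕ) (wt : List ℕ) (e : ℕ) : ℕ :=
  Nat.dist (fb b (wt.getD e 0 + e)) (fb b (wt.getD e 0))

def pathOk (b : ℕ) (wt : List ℕ) (sink : ℕ) : ℕ → ℕ → Bool
  | 0, e => e == sink
  | fuel+1, e => e == sink || pathOk b wt sink fuel (nextE b wt e)
lemma fb_one (b : ℕ) (hb : 2 ≤ b) : fb b 1 = 1 := by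
  rw [fb_eq b hb 1 le_rfl, Nat.mod_eq_of_lt (by omega), Nat.div_eq_of_lt (by omega)]
  simp [fb_zero]

lemma pairOdd (c b u : ℕ) (hb : 2 ≤ b) (hu : c + 1 ≤ u) (hcert : CertOne c b u)
    (wt : List ℕ) :
    ∀ fuel e p, 0 < e → pathOk b wt 1 fuel e = true → Vgood c b u {p, p + e} := by
  intro fuel
  induction fuel with
  | zero =>
    intro e p he hpath
    have : e = 1 := by simpa [pathOk] using hpath
    subst this
    exact finpair c b u hb hcert p
  | succ n ih =>
    intro e p he hpath
    rw [pathOk] at hpath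
    rcases Bool.or_eq_true _ _ |>.mp hpath with h1 | hnext
    · have : e = 1 := by simpa using h1
      subst this
      exact finpair c b u hb hcert p
    · set w := wt.getD e 0 with hw
      apply step c b u hb _ w p (by
        intro g hg
        rcases Finset.mem_insert.mp hg with rfl | hg
        · exact le_rfl
        · rw [Finset.mem_singleton] at hg; omega)
      have himg : ({p, p + e} : Finset ℕ).image (fun g => fb b (w + g - p))
          = {fb b w, fb b (w + e)} := by
        rw [Finset.image_insert, Finset.image_singleton]
        congr 2
        · congr 1; omega
        · congr 1; omega
      rw [himg]
      have hdist : nextE b wt e = Nat.dist (fb b (w + e)) (fb b w) := rfl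
      rcases Nat.lt_trichotomy (fb b w) (fb b (w + e)) with hlt | heq | hgt
      · have h2 : fb b (w + e) = fb b w + nextE b wt e := by
          rw [hdist, Nat.dist]; omega
        rw [h2]
        exact ih (nextE b wt e) (fb b w) (by rw [hdist, Nat.dist]; omega) hnext
      · rw [heq]
        have : ({fb b (w+e), fb b (w+e)} : Finset ℕ) = {fb b (w+e)} := by
          simp
        rw [this]
        exact fin1 c b u hb hu _
      · have h2 : fb b w = fb b (w + e) + nextE b wt e := by
          rw [hdist, Nat.dist]; omega
        have hcomm : ({fb b w, fb b (w+e)} : Finset ℕ) = {fb b (w+e), fb b w} :=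
          Finset.pair_comm _ _
        rw [hcomm, h2]
        exact ih (nextE b wt e) (fb b (w+e)) (by rw [hdist, Nat.dist]; omega) hnext

lemma card_image_lt (G : Finset ℕ) (φ : ℕ → ℕ) (p q : ℕ)
    (hp : p ∈ G) (hq : q ∈ G) (hne : p ≠ q) (heq : φ p = φ q) :
    (G.image φ).card < G.card := by
  have himg : G.image φ = (G.erase q).image φ := by
    apply subset_antisymm
    · intro x hx
      obtain ⟨y, hy, rfl⟩ := Finset.mem_image.mp hx
      rcases eq_or_ne y q with rfl | hyq
      · exact Finset.mem_image.mpr ⟨p, Finset.mem_erase.mpr ⟨hne, hp⟩, heq⟩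
      · exact Finset.mem_image.mpr ⟨y, Finset.mem_erase.mpr ⟨hyq, hy⟩, rfl⟩
    · exact Finset.image_subset_image (Finset.erase_subset _ _)
  rw [himg]
  calc ((G.erase q).image φ).card ≤ (G.erase q).card := Finset.card_image_le
  _ < G.card := Finset.card_erase_lt_of_mem hq

lemma merge (c b u : ℕ) (hb : 2 ≤ b) (hu : c + 1 ≤ u) (wt : List ℕ) :
    ∀ fuel e, 0 < e → pathOk b wt 0 fuel e = true →
    ∀ G : Finset ℕ, ∀ p, p ∈ G → p + e ∈ G →
    (∀ H : Finset ℕ, H.card < G.card → Vgood c b u H) → Vgood c b u G := by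
  intro fuel
  induction fuel with
  | zero =>
    intro e he hpath
    have : e = 0 := by simpa [pathOk] using hpath
    omega
  | succ n ih =>
    intro e he hpath G p hp hpe hsmall
    rw [pathOk] at hpath
    rcases Bool.or_eq_true _ _ |>.mp hpath with h1 | hnext
    · have : e = 0 := by simpa using h1
      omega
    · have hne : G.Nonempty := ⟨p, hp⟩
      set β := G.min' hne with hβdef
      have hβ : ∀ g ∈ G, β ≤ g := fun g hg => Finset.min'_le G g hg
      have hβp : β ≤ p := hβ p hp
      set w0 := wt.getD e 0 with hw0
      -- inflate the witness so that it dominates p - β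
      set M := w0 + e + p + 1 with hM
      have hMpow : M < b ^ M := Nat.lt_pow_self (by omega : 1 < b)
      set W := w0 + b ^ M with hW
      have hWbig : p ≤ W := by omega
      set w := W - (p - β) with hwdef
      have hwp : w + p - β = W := by omega
      have hwpe : w + (p + e) - β = W + e := by omega
      have hfW : fb b W = fb b w0 + 1 := by
        have : W = w0 + b ^ M * 1 := by rw [hW]; ring
        rw [this, fb_split b hb M w0 1 (by omega), fb_one b hb]
      have hfWe : fb b (W + e) = fb b (w0 + e) + 1 := by
        have : W + e = (w0 + e) + b ^ M * 1 := by rw [hW]; ring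
        rw [this, fb_split b hb M (w0 + e) 1 (by omega), fb_one b hb]
      apply step c b u hb G w β hβ
      set φ := fun g => fb b (w + g - β) with hφ
      have hφp : φ p = fb b W := by rw [hφ]; simp only; rw [hwp]
      have hφpe : φ (p + e) = fb b (W + e) := by rw [hφ]; simp only; rw [hwpe]
      have hdist : nextE b wt e = Nat.dist (fb b (w0 + e)) (fb b w0) := rfl
      rcases Nat.lt_trichotomy (fb b w0) (fb b (w0 + e)) with hlt | heq | hgt
      · -- new pair (fb W, fb W + e')
        have he' : 0 < nextE b wt e := by rw [hdist, Nat.dist]; omega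
        have hkey : fb b (W + e) = fb b W + nextE b wt e := by
          rw [hfW, hfWe, hdist, Nat.dist]; omega
        apply ih (nextE b wt e) he' hnext (G.image φ) (fb b W)
        · rw [← hφp]; exact Finset.mem_image_of_mem φ hp
        · rw [← hkey, ← hφpe]; exact Finset.mem_image_of_mem φ hpe
        · intro H hH
          exact hsmall H (lt_of_lt_of_le hH Finset.card_image_le)
      · -- collision
        have hcol : φ p = φ (p + e) := by rw [hφp, hφpe, hfW, hfWe, heq]
        exact hsmall _ (card_image_lt G φ p (p + e) hp hpe (by omega) hcol)
      · have he' : 0 < nextE b wt e := by rw [hdist, Nat.dist]; omega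
        have hkey : fb b W = fb b (W + e) + nextE b wt e := by
          rw [hfW, hfWe, hdist, Nat.dist]; omega
        apply ih (nextE b wt e) he' hnext (G.image φ) (fb b (W + e))
        · rw [← hφpe]; exact Finset.mem_image_of_mem φ hpe
        · rw [← hkey, ← hφp]; exact Finset.mem_image_of_mem φ hp
        · intro H hH
          exact hsmall H (lt_of_lt_of_le hH Finset.card_image_le)

lemma master (c b u : ℕ) (hb : 2 ≤ b) (hu : c + 1 ≤ u) (hcert : CertOne c b u)
    (m₀ : ℕ) (wtO wtE : List ℕ) (fuelO fuelE : ℕ)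
    (hodd : ∀ e, e ≤ m₀ → e % 2 = 1 → pathOk b wtO 1 fuelO e = true)
    (heven : ∀ e, e ≤ m₀ → e % 2 = 0 → pathOk b wtE 0 fuelE e = true)
    (hF7 : ∀ x, fb b x ≤ m₀ ∨ c + fb b x < x) :
    ∀ G : Finset ℕ, Vgood c b u G := by
  suffices H : ∀ n m (G : Finset ℕ), G.card ≤ n → G.sup id ≤ m → Vgood c b u G by
    exact fun G => H G.card (G.sup id) G le_rfl le_rfl
  intro n
  induction n with
  | zero =>
    intro m G hcard _
    have : G = ∅ := Finset.card_eq_zero.mp (Nat.le_zero.mp hcard)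
    subst this
    exact ⟨1, le_rfl, by simp⟩
  | succ n ihn =>
    intro m
    induction m using Nat.strong_induction_on with
    | _ m ihm =>
      intro G hcard hsup
      rcases Nat.lt_or_ge G.card (n+1) with hlt | hge
      · exact ihn m G (by omega) hsup
      have hGcard : G.card = n + 1 := by omega
      · by_cases hm : m ≤ m₀
        · -- small regime
          rcases Nat.eq_zero_or_pos n with rfl | hn
          · obtain ⟨g, rfl⟩ := Finset.card_eq_one.mp hGcard
            exact fin1 c b u hb hu g
          · -- card ≥ 2
            have h2card : 2 ≤ G.card := by omega
            -- find p < q in G with appropriate parity handling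
            have hsmall : ∀ H : Finset ℕ, H.card < G.card → Vgood c b u H := by
              intro H hH
              exact ihn (H.sup id) H (by omega) le_rfl
            have hbound : ∀ g ∈ G, g ≤ m₀ := by
              intro g hg
              exact le_trans (le_trans (Finset.le_sup (f := id) hg) hsup) hm
            by_cases h3 : 3 ≤ G.card
            · -- pigeonhole: two elements with equal parity
              have hmaps : ∀ g ∈ G, g % 2 ∈ Finset.range 2 := by
                intro g _; simp [Nat.mod_lt g (by norm_num : 0 < 2)]
              have hlt2 : (Finset.range 2).card < G.card := by
                rw [Finset.card_range]; omega
              obtain ⟨p, hp, q, hq, hpq, hmod⟩ :=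
                Finset.exists_ne_map_eq_of_card_lt_of_maps_to hlt2 hmaps
              rcases Nat.lt_or_ge p q with hlt | hge
              · have he : q = p + (q - p) := by omega
                apply merge c b u hb hu wtE fuelE (q - p) (by omega)
                  (heven (q-p) (by have := hbound q hq; omega) (by omega)) G p hp (by rw [← he]; exact hq) hsmall
              · have hlt : q < p := by omega
                have he : p = q + (p - q) := by omega
                apply merge c b u hb hu wtE fuelE (p - q) (by omega)
                  (heven (p-q) (by have := hbound p hp; omega) (by omega)) G q hq (by rw [← he]; exact hp) hsmall
            · -- exactly two elements
              have hc2 : G.card = 2 := by omega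
              obtain ⟨p, q, hpq, rfl⟩ := Finset.card_eq_two.mp hc2
              rcases Nat.lt_or_ge p q with hlt | hge
              · have he : q = p + (q - p) := by omega
                have hqm : q - p ≤ m₀ := by
                  have := hbound q (by simp); omega
                rcases Nat.even_or_odd (q - p) with hev | hod
                · apply merge c b u hb hu wtE fuelE (q - p) (by omega)
                    (heven (q-p) hqm (Nat.even_iff.mp hev)) {p, q} p (by simp)
                    (by rw [← he]; simp) hsmall
                · have : ({p, q} : Finset ℕ) = {p, p + (q - p)} := by rw [← he]
                  rw [this]
                  exact pairOdd c b u hb hu hcert wtO fuelO (q-p) p (by omega)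
                    (hodd (q-p) hqm (Nat.odd_iff.mp hod))
              · have hlt : q < p := by omega
                have he : p = q + (p - q) := by omega
                have hqm : p - q ≤ m₀ := by
                  have := hbound p (by simp); omega
                rcases Nat.even_or_odd (p - q) with hev | hod
                · apply merge c b u hb hu wtE fuelE (p - q) (by omega)
                    (heven (p-q) hqm (Nat.even_iff.mp hev)) {p, q} q (by simp)
                    (by rw [← he]; simp) hsmall
                · have : ({p, q} : Finset ℕ) = {q, q + (p - q)} := by
                    rw [← he]; exact Finset.pair_comm p q
                  rw [this]
                  exact pairOdd c b u hb hu hcert wtO fuelO (p-q) q (by omega)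
                    (hodd (p-q) hqm (Nat.odd_iff.mp hod))
        · -- shrink
          by_cases hs : G.sup id ≤ m₀
          · exact ihm m₀ (by omega) G hcard hs
          · apply step c b u hb G c 0 (fun _ _ => Nat.zero_le _)
            apply ihm (m - 1) (by omega) _ (le_trans Finset.card_image_le hcard)
            apply Finset.sup_le
            intro x hx
            obtain ⟨g, hg, rfl⟩ := Finset.mem_image.mp hx
            have hgm : g ≤ m := le_trans (Finset.le_sup (f := id) hg) hsup
            rcases hF7 (c + g - 0) with h | h
            · simp only [id]; omega
            · simp only [id]
              have : c + g - 0 = c + g := by omega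
              rw [this] at h ⊢
              omega

lemma finish (c b u : ℕ) (hb : 2 ≤ b) (hV : ∀ G : Finset ℕ, Vgood c b u G)
    (T : Finset ℕ) :
    ∃ n k : ℕ, 0 < n ∧ 0 < k ∧ ∀ t ∈ T, ∃ j : ℕ, (Fb c b)^[k] (t + n) = (Fb c b)^[j] u := by
  obtain ⟨A, hA, hall⟩ := hV (T.image (fb b))
  set M := T.sup id + 1 with hM
  have hMpow : M < b ^ M := Nat.lt_pow_self (by omega : 1 < b)
  have ht : ∀ t ∈ T, t < b ^ M := by
    intro t htT
    have : t ≤ T.sup id := Finset.le_sup (f := id) htT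
    omega
  set nn := b ^ M * repu b A with hnn
  have hnpos : 0 < nn := by
    have := repu_pos b A hA
    have := Nat.one_le_pow M b (by omega)
    positivity
  have hstep1 : ∀ t ∈ T, Fb c b (t + nn) = c + fb b t + A := by
    intro t htT
    unfold Fb
    rw [hnn, fb_split b hb M t _ (ht t htT), fb_repu b hb, Nat.add_assoc]
  have hVp : ∀ t : ℕ, ∃ k j, t ∈ T → (Fb c b)^[k] (Fb c b (t + nn)) = (Fb c b)^[j] u := by
    intro t
    by_cases htT : t ∈ T
    · obtain ⟨k, j, hkj⟩ := hall (fb b t) (Finset.mem_image_of_mem _ htT)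
      exact ⟨k, j, fun _ => by rw [hstep1 t htT]; exact hkj⟩
    · exact ⟨0, 0, fun h => absurd h htT⟩
  choose kf jf hkj using hVp
  refine ⟨nn, T.sup kf + 1, hnpos, by omega, ?_⟩
  intro t htT
  refine ⟨T.sup kf - kf t + jf t, ?_⟩
  have hk : kf t ≤ T.sup kf := Finset.le_sup htT
  have hsplit : T.sup kf + 1 = (T.sup kf - kf t) + (kf t + 1) := by omega
  rw [hsplit, Function.iterate_add_apply, Function.iterate_succ_apply,
      Function.iterate_add_apply]
  congr 1
  exact hkj t htT

lemma mkF7 (c b m₀ : ℕ) (hb : 2 ≤ b) (hc9 : c ≤ 9) (hnum : 9 + 4*(b-1)^2 < b^3)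
    (hdec : ∀ x, x < b^3 → fb b x ≤ m₀ ∨ fb b x + 9 < x) :
    ∀ x, fb b x ≤ m₀ ∨ c + fb b x < x := by
  intro x
  rcases Nat.lt_or_ge x (b^3) with h | h
  · rcases hdec x h with h' | h'
    · exact Or.inl h'
    · exact Or.inr (by omega)
  · have := contract3 b hb hnum x h
    exact Or.inr (by omega)

lemma classify (c b : ℕ) (hb : 2 ≤ b) (hc1 : 1 ≤ c) (hc9 : c ≤ 9)
    (hnum : 9 + 4*(b-1)^2 < b^3)
    (PP : List ℕ) (K0 : ℕ)
    (habsorb : ∀ y, y ≤ c + 3*(b-1)^2 → 1 ≤ y → ∃ k, k ≤ K0 ∧ (Fb c b)^[k] y ∈ PP)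
    (hclosed : ∀ x ∈ PP, Fb c b x ∈ PP)
    (u : ℕ) (hu : 0 < u) (m : ℕ) (hm : 0 < m) (hmu : (Fb c b)^[m] u = u) :
    u ∈ PP := by
  set B2 := c + 3*(b-1)^2 with hB2
  -- iterates of PP stay in PP
  have hiter : ∀ j x, x ∈ PP → (Fb c b)^[j] x ∈ PP := by
    intro j
    induction j with
    | zero => intro x hx; exact hx
    | succ j ih =>
      intro x hx
      rw [Function.iterate_succ_apply]
      exact ih _ (hclosed x hx)
  -- descent to below b^3
  have hdesc : ∀ x, 1 ≤ x → ∃ k, (Fb c b)^[k] x < b^3 := by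
    intro x
    induction x using Nat.strong_induction_on with
    | _ x ih =>
      intro hx
      rcases Nat.lt_or_ge x (b^3) with h | h
      · exact ⟨0, h⟩
      · have hFx : Fb c b x < x := by
          have := contract3 b hb hnum x h
          unfold Fb; omega
        have hF1 : 1 ≤ Fb c b x := by unfold Fb; omega
        obtain ⟨k, hk⟩ := ih (Fb c b x) hFx hF1
        exact ⟨k + 1, by rwa [Function.iterate_succ_apply]⟩
  -- bound after one more step
  have hB : ∀ x, x < b^3 → 1 ≤ x → Fb c b x ≤ B2 := by
    intro x hx _
    have := fb_bound b hb 3 x hx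
    unfold Fb; omega
  have hpos : ∀ k x, 1 ≤ x → 1 ≤ (Fb c b)^[k] x := by
    intro k
    induction k with
    | zero => intro x hx; exact hx
    | succ k ih =>
      intro x hx
      rw [Function.iterate_succ_apply]
      exact ih _ (by unfold Fb; omega)
  -- u eventually in PP
  have hPPreach : ∃ K, (Fb c b)^[K] u ∈ PP := by
    obtain ⟨k, hk⟩ := hdesc u hu
    have h1 : 1 ≤ (Fb c b)^[k] u := hpos k u hu
    have h2 : Fb c b ((Fb c b)^[k] u) ≤ B2 := hB _ hk h1
    have h3 : 1 ≤ Fb c b ((Fb c b)^[k] u) := by unfold Fb; omega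
    obtain ⟨k2, hk2, hk2PP⟩ := habsorb _ h2 h3
    refine ⟨k2 + (k + 1), ?_⟩
    rw [Function.iterate_add_apply, Function.iterate_succ_apply']
    exact hk2PP
  -- periodicity pump
  have hpump : ∀ N, (Fb c b)^[m * N] u = u := by
    intro N
    induction N with
    | zero => rfl
    | succ N ih =>
      have : m * (N + 1) = m * N + m := by ring
      rw [this, Function.iterate_add_apply, hmu, ih]
  obtain ⟨K, hK⟩ := hPPreach
  have hmK : K ≤ m * K + m := by nlinarith
  have hpump' : (Fb c b)^[m * K + m] u = u := by
    have := hpump (K + 1)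
    rwa [show m * (K + 1) = m * K + m by ring] at this
  have hfin : u = (Fb c b)^[(m * K + m) - K] ((Fb c b)^[K] u) := by
    rw [← Function.iterate_add_apply]
    rw [show (m * K + m) - K + K = m * K + m by omega]
    rw [hpump']
  rw [hfin]
  exact hiter _ _ hK

lemma glue (c b : ℕ) (hb : 2 ≤ b)
    (main : ∀ u, 0 < u → (∃ m, 0 < m ∧ (Fb c b)^[m] u = u) → ∀ G : Finset ℕ, Vgood c b u G)
    (T : Finset ℕ) : CycleGood c b T := by
  intro u hu hper
  rw [S_eq_Fb c b hb] at hper ⊢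
  exact finish c b u hb (main u hu hper) T


def wt3 : List ℕ := [0,0,1,0,2,2,3,3,1,0,5,1,6,2,5,6,2,2,9,2,10,9,7,4,3,3,1,0,5,1,15,2,4,3,6,1,18,2,2,6,5,5,15,2,11,18,11,7,6,5,5,6,2,2,27,2,7,6,5,5,30,2,21,27,8,8,21,8,15,12]

def wt5 : List ℕ := [0,0,0,7,1,0,1,8,2,2,0,9,3,3,61,35,4,4,45,6,5,5,15,27,1,0,1,18,7,1,5,39,8,2,3,40,9,3,29,11,10,4,15,7,7,10,15,20,2,2,0,44,13,2,3,45,14,3,3,4,15,15,67,4,13,15,21,8,8,9,305,29,3,3,115,175,19,3,9,21,20,9,63,4,19,20,76,18,14,19,225,9,9]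

def wt7 : List ℕ := [0,0,0,39,31,9,1,0,1,0,25,10,2,2,0,0,137,11,3,3,5,273,131,12,4,4,5,218,217,13,5,5,92,42,113,63,6,6,36,35,107,8,7,7,21,35,199,51,1,0,1,0,137,24,9,1,7,1,131,25,10,2,3,0,186,39,11,3,12,5,175,33,12,4,62,5,121,70,13,5,133,6,65,15,14,6,21,28,42,9,9,14,21,28,151,52,2,2,0,0,180,39,17,2,3,0,181,33,18,3,3,4,959,76,19,19,35,4,129,77,20,20,36,5,6,22,21,21,37,55,129,16,17]

def wt9 : List ℕ := [0,0,1,0,50,67,39,11,1,0,2,0,60,50,31,12,2,2,9,0,636,392,67,13,3,3,5,0,628,43,43,14,4,4,5,8,450,376,50,15,5,5,316,7,442,603,43,16,6,6,17,73,515,352,351,17,7,7,65,8,153,263,181,99,8,8,46,45,153,336,173,10,9,9,27,45,54,571,327,83,1,0,2,0,636,392,67,30,11,1,18,1,0,303,50,31,12,2,3,0,0,376,123,42,13,3,14,5,540,385,43,43,14,4,25,5,533,450,213,49,15,5,107,6,89,280,279,41,16,6,126,17,63,191,191,108,17,7,207,45,73,72,101,19,18,8,27,36,54,72,183,11,11,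18,27,36,63,410,247,84,2,2,81,0,556,393,221,49,21,2,3,0,0,385,141,41,22,3,3,4,5724,394,231,42,23,23,154,4,7]

lemma hodd3 : ∀ e, e ≤ 9 → e % 2 = 1 → pathOk 3 wt3 1 2 e = true := by decide

lemma heven3 : ∀ e, e ≤ 9 → e % 2 = 0 → pathOk 3 wt3 0 2 e = true := by decide

lemma hdec3 : ∀ x, x < 3^3 → fb 3 x ≤ 9 ∨ fb 3 x + 9 < x := by decide

lemma hodd5 : ∀ e, e ≤ 32 → e % 2 = 1 → pathOk 5 wt5 1 3 e = true := by decide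

lemma heven5 : ∀ e, e ≤ 32 → e % 2 = 0 → pathOk 5 wt5 0 3 e = true := by decide

lemma hdec5 : ∀ x, x < 5^3 → fb 5 x ≤ 32 ∨ fb 5 x + 9 < x := by decide

lemma hodd7 : ∀ e, e ≤ 72 → e % 2 = 1 → pathOk 7 wt7 1 3 e = true := by decide

lemma heven7 : ∀ e, e ≤ 72 → e % 2 = 0 → pathOk 7 wt7 0 3 e = true := by decide

lemma hdec7 : ∀ x, x < 7^3 → fb 7 x ≤ 72 ∨ fb 7 x + 9 < x := by decide

lemma hodd9 : ∀ e, e ≤ 128 → e % 2 = 1 → pathOk 9 wt9 1 3 e = true := by decide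

lemma heven9 : ∀ e, e ≤ 128 → e % 2 = 0 → pathOk 9 wt9 0 3 e = true := by decide

lemma hdec9 : ∀ x, x < 9^3 → fb 9 x ≤ 128 ∨ fb 9 x + 9 < x := by decide

def PP_1_3 : List ℕ := [5,6]

lemma habsorb_1_3 : ∀ y, y ≤ 13 → 1 ≤ y → ∃ k, k ≤ 4 ∧ (Fb 1 3)^[k] y ∈ PP_1_3 := by decide

lemma hclosed_1_3 : ∀ x ∈ PP_1_3, Fb 1 3 x ∈ PP_1_3 := by decide

lemma case_1_3 (T : Finset ℕ) : CycleGood 1 3 T := by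
  apply glue 1 3 (by norm_num)
  intro u hu hper
  obtain ⟨m, hm, hmu⟩ := hper
  have hPP : u ∈ PP_1_3 := classify 1 3 (by norm_num) (by norm_num) (by norm_num) (by norm_num) PP_1_3 4 habsorb_1_3 hclosed_1_3 u hu m hm hmu
  have hF7 := mkF7 1 3 9 (by norm_num) (by norm_num) (by norm_num) hdec3
  simp only [PP_1_3, List.mem_cons, List.mem_singleton, List.not_mem_nil, or_false] at hPP
  rcases hPP with rfl|rfl
  · exact master 1 3 5 (by norm_num) (by norm_num) ⟨0, 1, by norm_num, ⟨1, 0, by decide⟩, ⟨2, 0, by decide⟩⟩ 9 wt3 wt3 2 2 hodd3 heven3 hF7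
  · exact master 1 3 6 (by norm_num) (by norm_num) ⟨0, 1, by norm_num, ⟨1, 1, by decide⟩, ⟨2, 1, by decide⟩⟩ 9 wt3 wt3 2 2 hodd3 heven3 hF7

def PP_3_3 : List ℕ := [8,11]

lemma habsorb_3_3 : ∀ y, y ≤ 15 → 1 ≤ y → ∃ k, k ≤ 4 ∧ (Fb 3 3)^[k] y ∈ PP_3_3 := by decide

lemma hclosed_3_3 : ∀ x ∈ PP_3_3, Fb 3 3 x ∈ PP_3_3 := by decide

lemma case_3_3 (T : Finset ℕ) : CycleGood 3 3 T := by
  apply glue 3 3 (by norm_num)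
  intro u hu hper
  obtain ⟨m, hm, hmu⟩ := hper
  have hPP : u ∈ PP_3_3 := classify 3 3 (by norm_num) (by norm_num) (by norm_num) (by norm_num) PP_3_3 4 habsorb_3_3 hclosed_3_3 u hu m hm hmu
  have hF7 := mkF7 3 3 9 (by norm_num) (by norm_num) (by norm_num) hdec3
  simp only [PP_3_3, List.mem_cons, List.mem_singleton, List.not_mem_nil, or_false] at hPP
  rcases hPP with rfl|rfl
  · exact master 3 3 8 (by norm_num) (by norm_num) ⟨0, 1, by norm_num, ⟨2, 0, by decide⟩, ⟨1, 0, by decide⟩⟩ 9 wt3 wt3 2 2 hodd3 heven3 hF7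
  · exact master 3 3 11 (by norm_num) (by norm_num) ⟨0, 1, by norm_num, ⟨2, 1, by decide⟩, ⟨1, 1, by decide⟩⟩ 9 wt3 wt3 2 2 hodd3 heven3 hF7

def PP_5_3 : List ℕ := [6,7,8,9,10,13]

lemma habsorb_5_3 : ∀ y, y ≤ 17 → 1 ≤ y → ∃ k, k ≤ 3 ∧ (Fb 5 3)^[k] y ∈ PP_5_3 := by decide

lemma hclosed_5_3 : ∀ x ∈ PP_5_3, Fb 5 3 x ∈ PP_5_3 := by decide

lemma case_5_3 (T : Finset ℕ) : CycleGood 5 3 T := by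
  apply glue 5 3 (by norm_num)
  intro u hu hper
  obtain ⟨m, hm, hmu⟩ := hper
  have hPP : u ∈ PP_5_3 := classify 5 3 (by norm_num) (by norm_num) (by norm_num) (by norm_num) PP_5_3 3 habsorb_5_3 hclosed_5_3 u hu m hm hmu
  have hF7 := mkF7 5 3 9 (by norm_num) (by norm_num) (by norm_num) hdec3
  simp only [PP_5_3, List.mem_cons, List.mem_singleton, List.not_mem_nil, or_false] at hPP
  rcases hPP with rfl|rfl|rfl|rfl|rfl|rfl
  · exact master 5 3 6 (by norm_num) (by norm_num) ⟨0, 48, by norm_num, ⟨2, 1, by decide⟩, ⟨1, 1, by decide⟩⟩ 9 wt3 wt3 2 2 hodd3 heven3 hF7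
  · exact master 5 3 7 (by norm_num) (by norm_num) ⟨0, 5, by norm_num, ⟨0, 1, by decide⟩, ⟨1, 1, by decide⟩⟩ 9 wt3 wt3 2 2 hodd3 heven3 hF7
  · exact master 5 3 8 (by norm_num) (by norm_num) ⟨8, 7, by norm_num, ⟨1, 1, by decide⟩, ⟨0, 1, by decide⟩⟩ 9 wt3 wt3 2 2 hodd3 heven3 hF7
  · exact master 5 3 9 (by norm_num) (by norm_num) ⟨0, 48, by norm_num, ⟨2, 0, by decide⟩, ⟨1, 0, by decide⟩⟩ 9 wt3 wt3 2 2 hodd3 heven3 hF7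
  · exact master 5 3 10 (by norm_num) (by norm_num) ⟨0, 5, by norm_num, ⟨0, 0, by decide⟩, ⟨1, 0, by decide⟩⟩ 9 wt3 wt3 2 2 hodd3 heven3 hF7
  · exact master 5 3 13 (by norm_num) (by norm_num) ⟨8, 7, by norm_num, ⟨1, 0, by decide⟩, ⟨0, 0, by decide⟩⟩ 9 wt3 wt3 2 2 hodd3 heven3 hF7

def PP_7_3 : List ℕ := [8,9,12,15]

lemma habsorb_7_3 : ∀ y, y ≤ 19 → 1 ≤ y → ∃ k, k ≤ 4 ∧ (Fb 7 3)^[k] y ∈ PP_7_3 := by decide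

lemma hclosed_7_3 : ∀ x ∈ PP_7_3, Fb 7 3 x ∈ PP_7_3 := by decide

lemma case_7_3 (T : Finset ℕ) : CycleGood 7 3 T := by
  apply glue 7 3 (by norm_num)
  intro u hu hper
  obtain ⟨m, hm, hmu⟩ := hper
  have hPP : u ∈ PP_7_3 := classify 7 3 (by norm_num) (by norm_num) (by norm_num) (by norm_num) PP_7_3 4 habsorb_7_3 hclosed_7_3 u hu m hm hmu
  have hF7 := mkF7 7 3 9 (by norm_num) (by norm_num) (by norm_num) hdec3
  simp only [PP_7_3, List.mem_cons, List.mem_singleton, List.not_mem_nil, or_false] at hPP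
  rcases hPP with rfl|rfl|rfl|rfl
  · exact master 7 3 8 (by norm_num) (by norm_num) ⟨0, 1, by norm_num, ⟨0, 0, by decide⟩, ⟨0, 3, by decide⟩⟩ 9 wt3 wt3 2 2 hodd3 heven3 hF7
  · exact master 7 3 9 (by norm_num) (by norm_num) ⟨0, 1, by norm_num, ⟨0, 1, by decide⟩, ⟨0, 0, by decide⟩⟩ 9 wt3 wt3 2 2 hodd3 heven3 hF7
  · exact master 7 3 12 (by norm_num) (by norm_num) ⟨0, 1, by norm_num, ⟨0, 2, by decide⟩, ⟨0, 1, by decide⟩⟩ 9 wt3 wt3 2 2 hodd3 heven3 hF7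
  · exact master 7 3 15 (by norm_num) (by norm_num) ⟨0, 1, by norm_num, ⟨0, 3, by decide⟩, ⟨0, 2, by decide⟩⟩ 9 wt3 wt3 2 2 hodd3 heven3 hF7

def PP_9_3 : List ℕ := [14,15]

lemma habsorb_9_3 : ∀ y, y ≤ 21 → 1 ≤ y → ∃ k, k ≤ 6 ∧ (Fb 9 3)^[k] y ∈ PP_9_3 := by decide

lemma hclosed_9_3 : ∀ x ∈ PP_9_3, Fb 9 3 x ∈ PP_9_3 := by decide

lemma case_9_3 (T : Finset ℕ) : CycleGood 9 3 T := by
  apply glue 9 3 (by norm_num)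
  intro u hu hper
  obtain ⟨m, hm, hmu⟩ := hper
  have hPP : u ∈ PP_9_3 := classify 9 3 (by norm_num) (by norm_num) (by norm_num) (by norm_num) PP_9_3 6 habsorb_9_3 hclosed_9_3 u hu m hm hmu
  have hF7 := mkF7 9 3 9 (by norm_num) (by norm_num) (by norm_num) hdec3
  simp only [PP_9_3, List.mem_cons, List.mem_singleton, List.not_mem_nil, or_false] at hPP
  rcases hPP with rfl|rfl
  · exact master 9 3 14 (by norm_num) (by norm_num) ⟨0, 1, by norm_num, ⟨2, 0, by decide⟩, ⟨1, 0, by decide⟩⟩ 9 wt3 wt3 2 2 hodd3 heven3 hF7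
  · exact master 9 3 15 (by norm_num) (by norm_num) ⟨0, 1, by norm_num, ⟨2, 1, by decide⟩, ⟨1, 1, by decide⟩⟩ 9 wt3 wt3 2 2 hodd3 heven3 hF7

def PP_1_5 : List ℕ := [2,5]

lemma habsorb_1_5 : ∀ y, y ≤ 49 → 1 ≤ y → ∃ k, k ≤ 10 ∧ (Fb 1 5)^[k] y ∈ PP_1_5 := by decide

lemma hclosed_1_5 : ∀ x ∈ PP_1_5, Fb 1 5 x ∈ PP_1_5 := by decide

lemma case_1_5 (T : Finset ℕ) : CycleGood 1 5 T := by
  apply glue 1 5 (by norm_num)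
  intro u hu hper
  obtain ⟨m, hm, hmu⟩ := hper
  have hPP : u ∈ PP_1_5 := classify 1 5 (by norm_num) (by norm_num) (by norm_num) (by norm_num) PP_1_5 10 habsorb_1_5 hclosed_1_5 u hu m hm hmu
  have hF7 := mkF7 1 5 32 (by norm_num) (by norm_num) (by norm_num) hdec5
  simp only [PP_1_5, List.mem_cons, List.mem_singleton, List.not_mem_nil, or_false] at hPP
  rcases hPP with rfl|rfl
  · exact master 1 5 2 (by norm_num) (by norm_num) ⟨0, 1, by norm_num, ⟨0, 0, by decide⟩, ⟨2, 1, by decide⟩⟩ 32 wt5 wt5 3 3 hodd5 heven5 hF7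
  · exact master 1 5 5 (by norm_num) (by norm_num) ⟨0, 1, by norm_num, ⟨0, 1, by decide⟩, ⟨2, 0, by decide⟩⟩ 32 wt5 wt5 3 3 hodd5 heven5 hF7

def PP_3_5 : List ℕ := [13,16]

lemma habsorb_3_5 : ∀ y, y ≤ 51 → 1 ≤ y → ∃ k, k ≤ 6 ∧ (Fb 3 5)^[k] y ∈ PP_3_5 := by decide

lemma hclosed_3_5 : ∀ x ∈ PP_3_5, Fb 3 5 x ∈ PP_3_5 := by decide

lemma case_3_5 (T : Finset ℕ) : CycleGood 3 5 T := by
  apply glue 3 5 (by norm_num)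
  intro u hu hper
  obtain ⟨m, hm, hmu⟩ := hper
  have hPP : u ∈ PP_3_5 := classify 3 5 (by norm_num) (by norm_num) (by norm_num) (by norm_num) PP_3_5 6 habsorb_3_5 hclosed_3_5 u hu m hm hmu
  have hF7 := mkF7 3 5 32 (by norm_num) (by norm_num) (by norm_num) hdec5
  simp only [PP_3_5, List.mem_cons, List.mem_singleton, List.not_mem_nil, or_false] at hPP
  rcases hPP with rfl|rfl
  · exact master 3 5 13 (by norm_num) (by norm_num) ⟨0, 1, by norm_num, ⟨3, 0, by decide⟩, ⟨4, 0, by decide⟩⟩ 32 wt5 wt5 3 3 hodd5 heven5 hF7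
  · exact master 3 5 16 (by norm_num) (by norm_num) ⟨0, 1, by norm_num, ⟨3, 1, by decide⟩, ⟨4, 1, by decide⟩⟩ 32 wt5 wt5 3 3 hodd5 heven5 hF7

def PP_5_5 : List ℕ := [6,7,9,10,22,25]

lemma habsorb_5_5 : ∀ y, y ≤ 53 → 1 ≤ y → ∃ k, k ≤ 5 ∧ (Fb 5 5)^[k] y ∈ PP_5_5 := by decide

lemma hclosed_5_5 : ∀ x ∈ PP_5_5, Fb 5 5 x ∈ PP_5_5 := by decide

lemma case_5_5 (T : Finset ℕ) : CycleGood 5 5 T := by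
  apply glue 5 5 (by norm_num)
  intro u hu hper
  obtain ⟨m, hm, hmu⟩ := hper
  have hPP : u ∈ PP_5_5 := classify 5 5 (by norm_num) (by norm_num) (by norm_num) (by norm_num) PP_5_5 5 habsorb_5_5 hclosed_5_5 u hu m hm hmu
  have hF7 := mkF7 5 5 32 (by norm_num) (by norm_num) (by norm_num) hdec5
  simp only [PP_5_5, List.mem_cons, List.mem_singleton, List.not_mem_nil, or_false] at hPP
  rcases hPP with rfl|rfl|rfl|rfl|rfl|rfl
  · exact master 5 5 6 (by norm_num) (by norm_num) ⟨0, 1, by norm_num, ⟨0, 0, by decide⟩, ⟨0, 1, by decide⟩⟩ 32 wt5 wt5 3 3 hodd5 heven5 hF7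
  · exact master 5 5 7 (by norm_num) (by norm_num) ⟨0, 1, by norm_num, ⟨0, 5, by decide⟩, ⟨0, 0, by decide⟩⟩ 32 wt5 wt5 3 3 hodd5 heven5 hF7
  · exact master 5 5 9 (by norm_num) (by norm_num) ⟨0, 1, by norm_num, ⟨0, 3, by decide⟩, ⟨0, 4, by decide⟩⟩ 32 wt5 wt5 3 3 hodd5 heven5 hF7
  · exact master 5 5 10 (by norm_num) (by norm_num) ⟨0, 1, by norm_num, ⟨0, 4, by decide⟩, ⟨0, 5, by decide⟩⟩ 32 wt5 wt5 3 3 hodd5 heven5 hF7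
  · exact master 5 5 22 (by norm_num) (by norm_num) ⟨0, 1, by norm_num, ⟨0, 2, by decide⟩, ⟨0, 3, by decide⟩⟩ 32 wt5 wt5 3 3 hodd5 heven5 hF7
  · exact master 5 5 25 (by norm_num) (by norm_num) ⟨0, 1, by norm_num, ⟨0, 1, by decide⟩, ⟨0, 2, by decide⟩⟩ 32 wt5 wt5 3 3 hodd5 heven5 hF7

def PP_7_5 : List ℕ := [13,20,23,32]

lemma habsorb_7_5 : ∀ y, y ≤ 55 → 1 ≤ y → ∃ k, k ≤ 7 ∧ (Fb 7 5)^[k] y ∈ PP_7_5 := by decide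

lemma hclosed_7_5 : ∀ x ∈ PP_7_5, Fb 7 5 x ∈ PP_7_5 := by decide

lemma case_7_5 (T : Finset ℕ) : CycleGood 7 5 T := by
  apply glue 7 5 (by norm_num)
  intro u hu hper
  obtain ⟨m, hm, hmu⟩ := hper
  have hPP : u ∈ PP_7_5 := classify 7 5 (by norm_num) (by norm_num) (by norm_num) (by norm_num) PP_7_5 7 habsorb_7_5 hclosed_7_5 u hu m hm hmu
  have hF7 := mkF7 7 5 32 (by norm_num) (by norm_num) (by norm_num) hdec5
  simp only [PP_7_5, List.mem_cons, List.mem_singleton, List.not_mem_nil, or_false] at hPP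
  rcases hPP with rfl|rfl|rfl|rfl
  · exact master 7 5 13 (by norm_num) (by norm_num) ⟨0, 1, by norm_num, ⟨2, 1, by decide⟩, ⟨5, 1, by decide⟩⟩ 32 wt5 wt5 3 3 hodd5 heven5 hF7
  · exact master 7 5 20 (by norm_num) (by norm_num) ⟨0, 1, by norm_num, ⟨2, 0, by decide⟩, ⟨5, 0, by decide⟩⟩ 32 wt5 wt5 3 3 hodd5 heven5 hF7
  · exact master 7 5 23 (by norm_num) (by norm_num) ⟨0, 1, by norm_num, ⟨2, 3, by decide⟩, ⟨5, 3, by decide⟩⟩ 32 wt5 wt5 3 3 hodd5 heven5 hF7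
  · exact master 7 5 32 (by norm_num) (by norm_num) ⟨0, 1, by norm_num, ⟨2, 2, by decide⟩, ⟨5, 2, by decide⟩⟩ 32 wt5 wt5 3 3 hodd5 heven5 hF7

def PP_9_5 : List ℕ := [11,14,26,29]

lemma habsorb_9_5 : ∀ y, y ≤ 57 → 1 ≤ y → ∃ k, k ≤ 7 ∧ (Fb 9 5)^[k] y ∈ PP_9_5 := by decide

lemma hclosed_9_5 : ∀ x ∈ PP_9_5, Fb 9 5 x ∈ PP_9_5 := by decide

lemma case_9_5 (T : Finset ℕ) : CycleGood 9 5 T := by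
  apply glue 9 5 (by norm_num)
  intro u hu hper
  obtain ⟨m, hm, hmu⟩ := hper
  have hPP : u ∈ PP_9_5 := classify 9 5 (by norm_num) (by norm_num) (by norm_num) (by norm_num) PP_9_5 7 habsorb_9_5 hclosed_9_5 u hu m hm hmu
  have hF7 := mkF7 9 5 32 (by norm_num) (by norm_num) (by norm_num) hdec5
  simp only [PP_9_5, List.mem_cons, List.mem_singleton, List.not_mem_nil, or_false] at hPP
  rcases hPP with rfl|rfl|rfl|rfl
  · exact master 9 5 11 (by norm_num) (by norm_num) ⟨0, 1, by norm_num, ⟨3, 2, by decide⟩, ⟨0, 0, by decide⟩⟩ 32 wt5 wt5 3 3 hodd5 heven5 hF7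
  · exact master 9 5 14 (by norm_num) (by norm_num) ⟨0, 1, by norm_num, ⟨3, 1, by decide⟩, ⟨0, 3, by decide⟩⟩ 32 wt5 wt5 3 3 hodd5 heven5 hF7
  · exact master 9 5 26 (by norm_num) (by norm_num) ⟨0, 1, by norm_num, ⟨3, 3, by decide⟩, ⟨0, 1, by decide⟩⟩ 32 wt5 wt5 3 3 hodd5 heven5 hF7
  · exact master 9 5 29 (by norm_num) (by norm_num) ⟨0, 1, by norm_num, ⟨3, 0, by decide⟩, ⟨0, 2, by decide⟩⟩ 32 wt5 wt5 3 3 hodd5 heven5 hF7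

def PP_1_7 : List ℕ := [10,11,18,21,26,35]

lemma habsorb_1_7 : ∀ y, y ≤ 109 → 1 ≤ y → ∃ k, k ≤ 9 ∧ (Fb 1 7)^[k] y ∈ PP_1_7 := by decide

lemma hclosed_1_7 : ∀ x ∈ PP_1_7, Fb 1 7 x ∈ PP_1_7 := by decide

lemma case_1_7 (T : Finset ℕ) : CycleGood 1 7 T := by
  apply glue 1 7 (by norm_num)
  intro u hu hper
  obtain ⟨m, hm, hmu⟩ := hper
  have hPP : u ∈ PP_1_7 := classify 1 7 (by norm_num) (by norm_num) (by norm_num) (by norm_num) PP_1_7 9 habsorb_1_7 hclosed_1_7 u hu m hm hmu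
  have hF7 := mkF7 1 7 72 (by norm_num) (by norm_num) (by norm_num) hdec7
  simp only [PP_1_7, List.mem_cons, List.mem_singleton, List.not_mem_nil, or_false] at hPP
  rcases hPP with rfl|rfl|rfl|rfl|rfl|rfl
  · exact master 1 7 10 (by norm_num) (by norm_num) ⟨0, 7, by norm_num, ⟨2, 0, by decide⟩, ⟨4, 3, by decide⟩⟩ 72 wt7 wt7 3 3 hodd7 heven7 hF7
  · exact master 1 7 11 (by norm_num) (by norm_num) ⟨0, 7, by norm_num, ⟨2, 3, by decide⟩, ⟨4, 2, by decide⟩⟩ 72 wt7 wt7 3 3 hodd7 heven7 hF7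
  · exact master 1 7 18 (by norm_num) (by norm_num) ⟨0, 7, by norm_num, ⟨2, 2, by decide⟩, ⟨4, 1, by decide⟩⟩ 72 wt7 wt7 3 3 hodd7 heven7 hF7
  · exact master 1 7 21 (by norm_num) (by norm_num) ⟨0, 7, by norm_num, ⟨2, 1, by decide⟩, ⟨4, 0, by decide⟩⟩ 72 wt7 wt7 3 3 hodd7 heven7 hF7
  · exact master 1 7 26 (by norm_num) (by norm_num) ⟨0, 3, by norm_num, ⟨4, 0, by decide⟩, ⟨1, 0, by decide⟩⟩ 72 wt7 wt7 3 3 hodd7 heven7 hF7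
  · exact master 1 7 35 (by norm_num) (by norm_num) ⟨0, 3, by norm_num, ⟨4, 1, by decide⟩, ⟨1, 1, by decide⟩⟩ 72 wt7 wt7 3 3 hodd7 heven7 hF7

def PP_3_7 : List ℕ := [19,20,28,32,35,40,43,53]

lemma habsorb_3_7 : ∀ y, y ≤ 111 → 1 ≤ y → ∃ k, k ≤ 6 ∧ (Fb 3 7)^[k] y ∈ PP_3_7 := by decide

lemma hclosed_3_7 : ∀ x ∈ PP_3_7, Fb 3 7 x ∈ PP_3_7 := by decide

lemma case_3_7 (T : Finset ℕ) : CycleGood 3 7 T := by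
  apply glue 3 7 (by norm_num)
  intro u hu hper
  obtain ⟨m, hm, hmu⟩ := hper
  have hPP : u ∈ PP_3_7 := classify 3 7 (by norm_num) (by norm_num) (by norm_num) (by norm_num) PP_3_7 6 habsorb_3_7 hclosed_3_7 u hu m hm hmu
  have hF7 := mkF7 3 7 72 (by norm_num) (by norm_num) (by norm_num) hdec7
  simp only [PP_3_7, List.mem_cons, List.mem_singleton, List.not_mem_nil, or_false] at hPP
  rcases hPP with rfl|rfl|rfl|rfl|rfl|rfl|rfl|rfl
  · exact master 3 7 19 (by norm_num) (by norm_num) ⟨0, 1, by norm_num, ⟨1, 0, by decide⟩, ⟨1, 3, by decide⟩⟩ 72 wt7 wt7 3 3 hodd7 heven7 hF7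
  · exact master 3 7 20 (by norm_num) (by norm_num) ⟨0, 7, by norm_num, ⟨2, 2, by decide⟩, ⟨1, 0, by decide⟩⟩ 72 wt7 wt7 3 3 hodd7 heven7 hF7
  · exact master 3 7 28 (by norm_num) (by norm_num) ⟨0, 1, by norm_num, ⟨1, 1, by decide⟩, ⟨1, 0, by decide⟩⟩ 72 wt7 wt7 3 3 hodd7 heven7 hF7
  · exact master 3 7 32 (by norm_num) (by norm_num) ⟨0, 1, by norm_num, ⟨1, 3, by decide⟩, ⟨1, 2, by decide⟩⟩ 72 wt7 wt7 3 3 hodd7 heven7 hF7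
  · exact master 3 7 35 (by norm_num) (by norm_num) ⟨0, 1, by norm_num, ⟨1, 2, by decide⟩, ⟨1, 1, by decide⟩⟩ 72 wt7 wt7 3 3 hodd7 heven7 hF7
  · exact master 3 7 40 (by norm_num) (by norm_num) ⟨0, 7, by norm_num, ⟨2, 0, by decide⟩, ⟨1, 2, by decide⟩⟩ 72 wt7 wt7 3 3 hodd7 heven7 hF7
  · exact master 3 7 43 (by norm_num) (by norm_num) ⟨0, 7, by norm_num, ⟨2, 1, by decide⟩, ⟨1, 3, by decide⟩⟩ 72 wt7 wt7 3 3 hodd7 heven7 hF7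
  · exact master 3 7 53 (by norm_num) (by norm_num) ⟨0, 7, by norm_num, ⟨2, 3, by decide⟩, ⟨1, 1, by decide⟩⟩ 72 wt7 wt7 3 3 hodd7 heven7 hF7

def PP_5_7 : List ℕ := [6,7,8,10,15,19,25,30,34,41,57,66]

lemma habsorb_5_7 : ∀ y, y ≤ 113 → 1 ≤ y → ∃ k, k ≤ 5 ∧ (Fb 5 7)^[k] y ∈ PP_5_7 := by decide

lemma hclosed_5_7 : ∀ x ∈ PP_5_7, Fb 5 7 x ∈ PP_5_7 := by decide

lemma case_5_7 (T : Finset ℕ) : CycleGood 5 7 T := by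
  apply glue 5 7 (by norm_num)
  intro u hu hper
  obtain ⟨m, hm, hmu⟩ := hper
  have hPP : u ∈ PP_5_7 := classify 5 7 (by norm_num) (by norm_num) (by norm_num) (by norm_num) PP_5_7 5 habsorb_5_7 hclosed_5_7 u hu m hm hmu
  have hF7 := mkF7 5 7 72 (by norm_num) (by norm_num) (by norm_num) hdec7
  simp only [PP_5_7, List.mem_cons, List.mem_singleton, List.not_mem_nil, or_false] at hPP
  rcases hPP with rfl|rfl|rfl|rfl|rfl|rfl|rfl|rfl|rfl|rfl|rfl|rfl
  · exact master 5 7 6 (by norm_num) (by norm_num) ⟨0, 1, by norm_num, ⟨0, 0, by decide⟩, ⟨0, 7, by decide⟩⟩ 72 wt7 wt7 3 3 hodd7 heven7 hF7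
  · exact master 5 7 7 (by norm_num) (by norm_num) ⟨0, 1, by norm_num, ⟨0, 1, by decide⟩, ⟨0, 0, by decide⟩⟩ 72 wt7 wt7 3 3 hodd7 heven7 hF7
  · exact master 5 7 8 (by norm_num) (by norm_num) ⟨0, 1, by norm_num, ⟨0, 2, by decide⟩, ⟨0, 1, by decide⟩⟩ 72 wt7 wt7 3 3 hodd7 heven7 hF7
  · exact master 5 7 10 (by norm_num) (by norm_num) ⟨0, 4, by norm_num, ⟨1, 0, by decide⟩, ⟨0, 0, by decide⟩⟩ 72 wt7 wt7 3 3 hodd7 heven7 hF7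
  · exact master 5 7 15 (by norm_num) (by norm_num) ⟨0, 4, by norm_num, ⟨1, 1, by decide⟩, ⟨0, 1, by decide⟩⟩ 72 wt7 wt7 3 3 hodd7 heven7 hF7
  · exact master 5 7 19 (by norm_num) (by norm_num) ⟨0, 1, by norm_num, ⟨0, 5, by decide⟩, ⟨0, 4, by decide⟩⟩ 72 wt7 wt7 3 3 hodd7 heven7 hF7
  · exact master 5 7 25 (by norm_num) (by norm_num) ⟨0, 12, by norm_num, ⟨2, 0, by decide⟩, ⟨1, 0, by decide⟩⟩ 72 wt7 wt7 3 3 hodd7 heven7 hF7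
  · exact master 5 7 30 (by norm_num) (by norm_num) ⟨0, 12, by norm_num, ⟨2, 1, by decide⟩, ⟨1, 1, by decide⟩⟩ 72 wt7 wt7 3 3 hodd7 heven7 hF7
  · exact master 5 7 34 (by norm_num) (by norm_num) ⟨0, 1, by norm_num, ⟨0, 4, by decide⟩, ⟨0, 3, by decide⟩⟩ 72 wt7 wt7 3 3 hodd7 heven7 hF7
  · exact master 5 7 41 (by norm_num) (by norm_num) ⟨0, 1, by norm_num, ⟨0, 7, by decide⟩, ⟨0, 6, by decide⟩⟩ 72 wt7 wt7 3 3 hodd7 heven7 hF7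
  · exact master 5 7 57 (by norm_num) (by norm_num) ⟨0, 1, by norm_num, ⟨0, 3, by decide⟩, ⟨0, 2, by decide⟩⟩ 72 wt7 wt7 3 3 hodd7 heven7 hF7
  · exact master 5 7 66 (by norm_num) (by norm_num) ⟨0, 1, by norm_num, ⟨0, 6, by decide⟩, ⟨0, 5, by decide⟩⟩ 72 wt7 wt7 3 3 hodd7 heven7 hF7

def PP_7_7 : List ℕ := [20,23,28,33,36,37,47,48,68,79]

lemma habsorb_7_7 : ∀ y, y ≤ 115 → 1 ≤ y → ∃ k, k ≤ 7 ∧ (Fb 7 7)^[k] y ∈ PP_7_7 := by decide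

lemma hclosed_7_7 : ∀ x ∈ PP_7_7, Fb 7 7 x ∈ PP_7_7 := by decide

lemma case_7_7 (T : Finset ℕ) : CycleGood 7 7 T := by
  apply glue 7 7 (by norm_num)
  intro u hu hper
  obtain ⟨m, hm, hmu⟩ := hper
  have hPP : u ∈ PP_7_7 := classify 7 7 (by norm_num) (by norm_num) (by norm_num) (by norm_num) PP_7_7 7 habsorb_7_7 hclosed_7_7 u hu m hm hmu
  have hF7 := mkF7 7 7 72 (by norm_num) (by norm_num) (by norm_num) hdec7
  simp only [PP_7_7, List.mem_cons, List.mem_singleton, List.not_mem_nil, or_false] at hPP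
  rcases hPP with rfl|rfl|rfl|rfl|rfl|rfl|rfl|rfl|rfl|rfl
  · exact master 7 7 20 (by norm_num) (by norm_num) ⟨0, 1, by norm_num, ⟨3, 5, by decide⟩, ⟨2, 5, by decide⟩⟩ 72 wt7 wt7 3 3 hodd7 heven7 hF7
  · exact master 7 7 23 (by norm_num) (by norm_num) ⟨0, 1, by norm_num, ⟨3, 6, by decide⟩, ⟨2, 6, by decide⟩⟩ 72 wt7 wt7 3 3 hodd7 heven7 hF7
  · exact master 7 7 28 (by norm_num) (by norm_num) ⟨0, 1, by norm_num, ⟨3, 7, by decide⟩, ⟨2, 7, by decide⟩⟩ 72 wt7 wt7 3 3 hodd7 heven7 hF7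
  · exact master 7 7 33 (by norm_num) (by norm_num) ⟨0, 1, by norm_num, ⟨3, 0, by decide⟩, ⟨2, 0, by decide⟩⟩ 72 wt7 wt7 3 3 hodd7 heven7 hF7
  · exact master 7 7 36 (by norm_num) (by norm_num) ⟨0, 1, by norm_num, ⟨3, 1, by decide⟩, ⟨2, 1, by decide⟩⟩ 72 wt7 wt7 3 3 hodd7 heven7 hF7
  · exact master 7 7 37 (by norm_num) (by norm_num) ⟨0, 1, by norm_num, ⟨3, 2, by decide⟩, ⟨2, 2, by decide⟩⟩ 72 wt7 wt7 3 3 hodd7 heven7 hF7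
  · exact master 7 7 47 (by norm_num) (by norm_num) ⟨0, 1, by norm_num, ⟨3, 4, by decide⟩, ⟨2, 4, by decide⟩⟩ 72 wt7 wt7 3 3 hodd7 heven7 hF7
  · exact master 7 7 48 (by norm_num) (by norm_num) ⟨0, 1, by norm_num, ⟨3, 9, by decide⟩, ⟨2, 9, by decide⟩⟩ 72 wt7 wt7 3 3 hodd7 heven7 hF7
  · exact master 7 7 68 (by norm_num) (by norm_num) ⟨0, 1, by norm_num, ⟨3, 3, by decide⟩, ⟨2, 3, by decide⟩⟩ 72 wt7 wt7 3 3 hodd7 heven7 hF7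
  · exact master 7 7 79 (by norm_num) (by norm_num) ⟨0, 1, by norm_num, ⟨3, 8, by decide⟩, ⟨2, 8, by decide⟩⟩ 72 wt7 wt7 3 3 hodd7 heven7 hF7

def PP_9_7 : List ℕ := [34,35,36,61]

lemma habsorb_9_7 : ∀ y, y ≤ 117 → 1 ≤ y → ∃ k, k ≤ 9 ∧ (Fb 9 7)^[k] y ∈ PP_9_7 := by decide

lemma hclosed_9_7 : ∀ x ∈ PP_9_7, Fb 9 7 x ∈ PP_9_7 := by decide

lemma case_9_7 (T : Finset ℕ) : CycleGood 9 7 T := by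
  apply glue 9 7 (by norm_num)
  intro u hu hper
  obtain ⟨m, hm, hmu⟩ := hper
  have hPP : u ∈ PP_9_7 := classify 9 7 (by norm_num) (by norm_num) (by norm_num) (by norm_num) PP_9_7 9 habsorb_9_7 hclosed_9_7 u hu m hm hmu
  have hF7 := mkF7 9 7 72 (by norm_num) (by norm_num) (by norm_num) hdec7
  simp only [PP_9_7, List.mem_cons, List.mem_singleton, List.not_mem_nil, or_false] at hPP
  rcases hPP with rfl|rfl|rfl|rfl
  · exact master 9 7 34 (by norm_num) (by norm_num) ⟨0, 1, by norm_num, ⟨5, 1, by decide⟩, ⟨4, 1, by decide⟩⟩ 72 wt7 wt7 3 3 hodd7 heven7 hF7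
  · exact master 9 7 35 (by norm_num) (by norm_num) ⟨0, 1, by norm_num, ⟨5, 2, by decide⟩, ⟨4, 2, by decide⟩⟩ 72 wt7 wt7 3 3 hodd7 heven7 hF7
  · exact master 9 7 36 (by norm_num) (by norm_num) ⟨0, 1, by norm_num, ⟨5, 3, by decide⟩, ⟨4, 3, by decide⟩⟩ 72 wt7 wt7 3 3 hodd7 heven7 hF7
  · exact master 9 7 61 (by norm_num) (by norm_num) ⟨0, 1, by norm_num, ⟨5, 0, by decide⟩, ⟨4, 0, by decide⟩⟩ 72 wt7 wt7 3 3 hodd7 heven7 hF7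

def PP_1_9 : List ℕ := [3,10]

lemma habsorb_1_9 : ∀ y, y ≤ 193 → 1 ≤ y → ∃ k, k ≤ 13 ∧ (Fb 1 9)^[k] y ∈ PP_1_9 := by decide

lemma hclosed_1_9 : ∀ x ∈ PP_1_9, Fb 1 9 x ∈ PP_1_9 := by decide

lemma case_1_9 (T : Finset ℕ) : CycleGood 1 9 T := by
  apply glue 1 9 (by norm_num)
  intro u hu hper
  obtain ⟨m, hm, hmu⟩ := hper
  have hPP : u ∈ PP_1_9 := classify 1 9 (by norm_num) (by norm_num) (by norm_num) (by norm_num) PP_1_9 13 habsorb_1_9 hclosed_1_9 u hu m hm hmu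
  have hF7 := mkF7 1 9 128 (by norm_num) (by norm_num) (by norm_num) hdec9
  simp only [PP_1_9, List.mem_cons, List.mem_singleton, List.not_mem_nil, or_false] at hPP
  rcases hPP with rfl|rfl
  · exact master 1 9 3 (by norm_num) (by norm_num) ⟨0, 1, by norm_num, ⟨6, 1, by decide⟩, ⟨0, 0, by decide⟩⟩ 128 wt9 wt9 3 3 hodd9 heven9 hF7
  · exact master 1 9 10 (by norm_num) (by norm_num) ⟨0, 1, by norm_num, ⟨6, 0, by decide⟩, ⟨0, 1, by decide⟩⟩ 128 wt9 wt9 3 3 hodd9 heven9 hF7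

def PP_3_9 : List ℕ := [4,8,9,19,67,68,77,92]

lemma habsorb_3_9 : ∀ y, y ≤ 195 → 1 ≤ y → ∃ k, k ≤ 8 ∧ (Fb 3 9)^[k] y ∈ PP_3_9 := by decide

lemma hclosed_3_9 : ∀ x ∈ PP_3_9, Fb 3 9 x ∈ PP_3_9 := by decide

lemma case_3_9 (T : Finset ℕ) : CycleGood 3 9 T := by
  apply glue 3 9 (by norm_num)
  intro u hu hper
  obtain ⟨m, hm, hmu⟩ := hper
  have hPP : u ∈ PP_3_9 := classify 3 9 (by norm_num) (by norm_num) (by norm_num) (by norm_num) PP_3_9 8 habsorb_3_9 hclosed_3_9 u hu m hm hmu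
  have hF7 := mkF7 3 9 128 (by norm_num) (by norm_num) (by norm_num) hdec9
  simp only [PP_3_9, List.mem_cons, List.mem_singleton, List.not_mem_nil, or_false] at hPP
  rcases hPP with rfl|rfl|rfl|rfl|rfl|rfl|rfl|rfl
  · exact master 3 9 4 (by norm_num) (by norm_num) ⟨0, 1, by norm_num, ⟨0, 0, by decide⟩, ⟨5, 2, by decide⟩⟩ 128 wt9 wt9 3 3 hodd9 heven9 hF7
  · exact master 3 9 8 (by norm_num) (by norm_num) ⟨0, 1, by norm_num, ⟨0, 6, by decide⟩, ⟨5, 0, by decide⟩⟩ 128 wt9 wt9 3 3 hodd9 heven9 hF7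
  · exact master 3 9 9 (by norm_num) (by norm_num) ⟨0, 1, by norm_num, ⟨0, 1, by decide⟩, ⟨5, 3, by decide⟩⟩ 128 wt9 wt9 3 3 hodd9 heven9 hF7
  · exact master 3 9 19 (by norm_num) (by norm_num) ⟨0, 1, by norm_num, ⟨0, 7, by decide⟩, ⟨5, 1, by decide⟩⟩ 128 wt9 wt9 3 3 hodd9 heven9 hF7
  · exact master 3 9 67 (by norm_num) (by norm_num) ⟨0, 1, by norm_num, ⟨0, 5, by decide⟩, ⟨5, 7, by decide⟩⟩ 128 wt9 wt9 3 3 hodd9 heven9 hF7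
  · exact master 3 9 68 (by norm_num) (by norm_num) ⟨0, 1, by norm_num, ⟨0, 4, by decide⟩, ⟨5, 6, by decide⟩⟩ 128 wt9 wt9 3 3 hodd9 heven9 hF7
  · exact master 3 9 77 (by norm_num) (by norm_num) ⟨0, 1, by norm_num, ⟨0, 3, by decide⟩, ⟨5, 5, by decide⟩⟩ 128 wt9 wt9 3 3 hodd9 heven9 hF7
  · exact master 3 9 92 (by norm_num) (by norm_num) ⟨0, 1, by norm_num, ⟨0, 2, by decide⟩, ⟨5, 4, by decide⟩⟩ 128 wt9 wt9 3 3 hodd9 heven9 hF7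

def PP_5_9 : List ℕ := [23,26,30,31,34,41,42,46,50,54,55,57,63,70,73,80,103,133]

lemma habsorb_5_9 : ∀ y, y ≤ 197 → 1 ≤ y → ∃ k, k ≤ 6 ∧ (Fb 5 9)^[k] y ∈ PP_5_9 := by decide

lemma hclosed_5_9 : ∀ x ∈ PP_5_9, Fb 5 9 x ∈ PP_5_9 := by decide

lemma case_5_9 (T : Finset ℕ) : CycleGood 5 9 T := by
  apply glue 5 9 (by norm_num)
  intro u hu hper
  obtain ⟨m, hm, hmu⟩ := hper
  have hPP : u ∈ PP_5_9 := classify 5 9 (by norm_num) (by norm_num) (by norm_num) (by norm_num) PP_5_9 6 habsorb_5_9 hclosed_5_9 u hu m hm hmu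
  have hF7 := mkF7 5 9 128 (by norm_num) (by norm_num) (by norm_num) hdec9
  simp only [PP_5_9, List.mem_cons, List.mem_singleton, List.not_mem_nil, or_false] at hPP
  rcases hPP with rfl|rfl|rfl|rfl|rfl|rfl|rfl|rfl|rfl|rfl|rfl|rfl|rfl|rfl|rfl|rfl|rfl|rfl
  · exact master 5 9 23 (by norm_num) (by norm_num) ⟨0, 1, by norm_num, ⟨1, 4, by decide⟩, ⟨1, 3, by decide⟩⟩ 128 wt9 wt9 3 3 hodd9 heven9 hF7
  · exact master 5 9 26 (by norm_num) (by norm_num) ⟨0, 68, by norm_num, ⟨0, 1, by decide⟩, ⟨1, 1, by decide⟩⟩ 128 wt9 wt9 3 3 hodd9 heven9 hF7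
  · exact master 5 9 30 (by norm_num) (by norm_num) ⟨0, 1, by norm_num, ⟨1, 5, by decide⟩, ⟨1, 4, by decide⟩⟩ 128 wt9 wt9 3 3 hodd9 heven9 hF7
  · exact master 5 9 31 (by norm_num) (by norm_num) ⟨0, 1, by norm_num, ⟨1, 6, by decide⟩, ⟨1, 5, by decide⟩⟩ 128 wt9 wt9 3 3 hodd9 heven9 hF7
  · exact master 5 9 34 (by norm_num) (by norm_num) ⟨0, 1, by norm_num, ⟨1, 3, by decide⟩, ⟨1, 2, by decide⟩⟩ 128 wt9 wt9 3 3 hodd9 heven9 hF7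
  · exact master 5 9 41 (by norm_num) (by norm_num) ⟨0, 1, by norm_num, ⟨1, 0, by decide⟩, ⟨1, 7, by decide⟩⟩ 128 wt9 wt9 3 3 hodd9 heven9 hF7
  · exact master 5 9 42 (by norm_num) (by norm_num) ⟨0, 7, by norm_num, ⟨2, 0, by decide⟩, ⟨4, 1, by decide⟩⟩ 128 wt9 wt9 3 3 hodd9 heven9 hF7
  · exact master 5 9 46 (by norm_num) (by norm_num) ⟨0, 1, by norm_num, ⟨1, 7, by decide⟩, ⟨1, 6, by decide⟩⟩ 128 wt9 wt9 3 3 hodd9 heven9 hF7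
  · exact master 5 9 50 (by norm_num) (by norm_num) ⟨0, 7, by norm_num, ⟨2, 2, by decide⟩, ⟨4, 3, by decide⟩⟩ 128 wt9 wt9 3 3 hodd9 heven9 hF7
  · exact master 5 9 54 (by norm_num) (by norm_num) ⟨0, 1, by norm_num, ⟨1, 1, by decide⟩, ⟨1, 0, by decide⟩⟩ 128 wt9 wt9 3 3 hodd9 heven9 hF7
  · exact master 5 9 55 (by norm_num) (by norm_num) ⟨0, 7, by norm_num, ⟨2, 1, by decide⟩, ⟨4, 2, by decide⟩⟩ 128 wt9 wt9 3 3 hodd9 heven9 hF7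
  · exact master 5 9 57 (by norm_num) (by norm_num) ⟨0, 7, by norm_num, ⟨2, 3, by decide⟩, ⟨4, 0, by decide⟩⟩ 128 wt9 wt9 3 3 hodd9 heven9 hF7
  · exact master 5 9 63 (by norm_num) (by norm_num) ⟨0, 1, by norm_num, ⟨1, 2, by decide⟩, ⟨1, 1, by decide⟩⟩ 128 wt9 wt9 3 3 hodd9 heven9 hF7
  · exact master 5 9 70 (by norm_num) (by norm_num) ⟨0, 68, by norm_num, ⟨0, 3, by decide⟩, ⟨1, 3, by decide⟩⟩ 128 wt9 wt9 3 3 hodd9 heven9 hF7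
  · exact master 5 9 73 (by norm_num) (by norm_num) ⟨0, 68, by norm_num, ⟨0, 0, by decide⟩, ⟨1, 0, by decide⟩⟩ 128 wt9 wt9 3 3 hodd9 heven9 hF7
  · exact master 5 9 80 (by norm_num) (by norm_num) ⟨53, 39, by norm_num, ⟨0, 1, by decide⟩, ⟨0, 0, by decide⟩⟩ 128 wt9 wt9 3 3 hodd9 heven9 hF7
  · exact master 5 9 103 (by norm_num) (by norm_num) ⟨0, 68, by norm_num, ⟨0, 2, by decide⟩, ⟨1, 2, by decide⟩⟩ 128 wt9 wt9 3 3 hodd9 heven9 hF7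
  · exact master 5 9 133 (by norm_num) (by norm_num) ⟨53, 39, by norm_num, ⟨0, 0, by decide⟩, ⟨0, 1, by decide⟩⟩ 128 wt9 wt9 3 3 hodd9 heven9 hF7

def PP_7_9 : List ℕ := [8,23,33,36,41,44,48,52,71,81,87,120]

lemma habsorb_7_9 : ∀ y, y ≤ 199 → 1 ≤ y → ∃ k, k ≤ 7 ∧ (Fb 7 9)^[k] y ∈ PP_7_9 := by decide

lemma hclosed_7_9 : ∀ x ∈ PP_7_9, Fb 7 9 x ∈ PP_7_9 := by decide

lemma case_7_9 (T : Finset ℕ) : CycleGood 7 9 T := by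
  apply glue 7 9 (by norm_num)
  intro u hu hper
  obtain ⟨m, hm, hmu⟩ := hper
  have hPP : u ∈ PP_7_9 := classify 7 9 (by norm_num) (by norm_num) (by norm_num) (by norm_num) PP_7_9 7 habsorb_7_9 hclosed_7_9 u hu m hm hmu
  have hF7 := mkF7 7 9 128 (by norm_num) (by norm_num) (by norm_num) hdec9
  simp only [PP_7_9, List.mem_cons, List.mem_singleton, List.not_mem_nil, or_false] at hPP
  rcases hPP with rfl|rfl|rfl|rfl|rfl|rfl|rfl|rfl|rfl|rfl|rfl|rfl
  · exact master 7 9 8 (by norm_num) (by norm_num) ⟨0, 1, by norm_num, ⟨0, 0, by decide⟩, ⟨1, 0, by decide⟩⟩ 128 wt9 wt9 3 3 hodd9 heven9 hF7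
  · exact master 7 9 23 (by norm_num) (by norm_num) ⟨0, 16, by norm_num, ⟨0, 0, by decide⟩, ⟨2, 1, by decide⟩⟩ 128 wt9 wt9 3 3 hodd9 heven9 hF7
  · exact master 7 9 33 (by norm_num) (by norm_num) ⟨0, 1, by norm_num, ⟨0, 3, by decide⟩, ⟨1, 3, by decide⟩⟩ 128 wt9 wt9 3 3 hodd9 heven9 hF7
  · exact master 7 9 36 (by norm_num) (by norm_num) ⟨0, 16, by norm_num, ⟨0, 1, by decide⟩, ⟨2, 0, by decide⟩⟩ 128 wt9 wt9 3 3 hodd9 heven9 hF7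
  · exact master 7 9 41 (by norm_num) (by norm_num) ⟨0, 24, by norm_num, ⟨2, 0, by decide⟩, ⟨1, 0, by decide⟩⟩ 128 wt9 wt9 3 3 hodd9 heven9 hF7
  · exact master 7 9 44 (by norm_num) (by norm_num) ⟨0, 13, by norm_num, ⟨2, 0, by decide⟩, ⟨3, 0, by decide⟩⟩ 128 wt9 wt9 3 3 hodd9 heven9 hF7
  · exact master 7 9 48 (by norm_num) (by norm_num) ⟨0, 24, by norm_num, ⟨2, 1, by decide⟩, ⟨1, 1, by decide⟩⟩ 128 wt9 wt9 3 3 hodd9 heven9 hF7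
  · exact master 7 9 52 (by norm_num) (by norm_num) ⟨0, 1, by norm_num, ⟨0, 2, by decide⟩, ⟨1, 2, by decide⟩⟩ 128 wt9 wt9 3 3 hodd9 heven9 hF7
  · exact master 7 9 71 (by norm_num) (by norm_num) ⟨0, 1, by norm_num, ⟨0, 5, by decide⟩, ⟨1, 5, by decide⟩⟩ 128 wt9 wt9 3 3 hodd9 heven9 hF7
  · exact master 7 9 81 (by norm_num) (by norm_num) ⟨0, 1, by norm_num, ⟨0, 1, by decide⟩, ⟨1, 1, by decide⟩⟩ 128 wt9 wt9 3 3 hodd9 heven9 hF7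
  · exact master 7 9 87 (by norm_num) (by norm_num) ⟨0, 13, by norm_num, ⟨2, 1, by decide⟩, ⟨3, 1, by decide⟩⟩ 128 wt9 wt9 3 3 hodd9 heven9 hF7
  · exact master 7 9 120 (by norm_num) (by norm_num) ⟨0, 1, by norm_num, ⟨0, 4, by decide⟩, ⟨1, 4, by decide⟩⟩ 128 wt9 wt9 3 3 hodd9 heven9 hF7

def PP_9_9 : List ℕ := [11,14,22,29,35,82]

lemma habsorb_9_9 : ∀ y, y ≤ 201 → 1 ≤ y → ∃ k, k ≤ 14 ∧ (Fb 9 9)^[k] y ∈ PP_9_9 := by decide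

lemma hclosed_9_9 : ∀ x ∈ PP_9_9, Fb 9 9 x ∈ PP_9_9 := by decide

lemma case_9_9 (T : Finset ℕ) : CycleGood 9 9 T := by
  apply glue 9 9 (by norm_num)
  intro u hu hper
  obtain ⟨m, hm, hmu⟩ := hper
  have hPP : u ∈ PP_9_9 := classify 9 9 (by norm_num) (by norm_num) (by norm_num) (by norm_num) PP_9_9 14 habsorb_9_9 hclosed_9_9 u hu m hm hmu
  have hF7 := mkF7 9 9 128 (by norm_num) (by norm_num) (by norm_num) hdec9
  simp only [PP_9_9, List.mem_cons, List.mem_singleton, List.not_mem_nil, or_false] at hPP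
  rcases hPP with rfl|rfl|rfl|rfl|rfl|rfl
  · exact master 9 9 11 (by norm_num) (by norm_num) ⟨0, 1, by norm_num, ⟨1, 0, by decide⟩, ⟨0, 0, by decide⟩⟩ 128 wt9 wt9 3 3 hodd9 heven9 hF7
  · exact master 9 9 14 (by norm_num) (by norm_num) ⟨0, 1, by norm_num, ⟨1, 3, by decide⟩, ⟨0, 3, by decide⟩⟩ 128 wt9 wt9 3 3 hodd9 heven9 hF7
  · exact master 9 9 22 (by norm_num) (by norm_num) ⟨0, 12, by norm_num, ⟨1, 0, by decide⟩, ⟨0, 0, by decide⟩⟩ 128 wt9 wt9 3 3 hodd9 heven9 hF7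
  · exact master 9 9 29 (by norm_num) (by norm_num) ⟨0, 12, by norm_num, ⟨1, 1, by decide⟩, ⟨0, 1, by decide⟩⟩ 128 wt9 wt9 3 3 hodd9 heven9 hF7
  · exact master 9 9 35 (by norm_num) (by norm_num) ⟨0, 1, by norm_num, ⟨1, 2, by decide⟩, ⟨0, 2, by decide⟩⟩ 128 wt9 wt9 3 3 hodd9 heven9 hF7
  · exact master 9 9 82 (by norm_num) (by norm_num) ⟨0, 1, by norm_num, ⟨1, 1, by decide⟩, ⟨0, 1, by decide⟩⟩ 128 wt9 wt9 3 3 hodd9 heven9 hF7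

end AGH


theorem stmt_18 (c b : ℕ) (hc : Odd c) (hbo : Odd b)
    (hc9 : 1 ≤ c ∧ c ≤ 9) (hb9 : 3 ≤ b ∧ b ≤ 9)
    (T : Finset ℕ) (hpos : ∀ t ∈ T, 0 < t) (hne : T.Nonempty) :
    CycleGood c b T := by
  rw [Nat.odd_iff] at hc hbo
  obtain ⟨hc1, hc9'⟩ := hc9
  obtain ⟨hb1, hb9'⟩ := hb9
  interval_cases c <;> interval_cases b <;>
    first
      | (exfalso; omega)
      | exact AGH.case_1_3 T
      | exact AGH.case_1_5 T
      | exact AGH.case_1_7 T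
      | exact AGH.case_1_9 T
      | exact AGH.case_3_3 T
      | exact AGH.case_3_5 T
      | exact AGH.case_3_7 T
      | exact AGH.case_3_9 T
      | exact AGH.case_5_3 T
      | exact AGH.case_5_5 T
      | exact AGH.case_5_7 T
      | exact AGH.case_5_9 T
      | exact AGH.case_7_3 T
      | exact AGH.case_7_5 T
      | exact AGH.case_7_7 T
      | exact AGH.case_7_9 T
      | exact AGH.case_9_3 T
      | exact AGH.case_9_5 T
      | exact AGH.case_9_7 T
      | exact AGH.case_9_9 T
end

section
/- Fix integers c ≥ 0 and b ≥ 2, and suppose S_{[c,b]} has only one cycle, i.e., any two periodic points of S_{[c,b]} lie in the same orbit: if S_{[c,b]}^m(u) = u and S_{[c,b]}^{m'}(u') = u' with m, m' ≥ 1, then u' = S_{[c,b]}^j(u) for some j ≥ 0. Then for each u ∈ U_{[c,b]}, every positive integer is u-attracted. -/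
/-- `u ∈ U_{[c,b]}`: `u` is a positive integer that is a periodic point of `S_{[c,b]}`. -/
def inU (c b u : ℕ) : Prop := 0 < u ∧ ∃ m, 0 < m ∧ (S c b)^[m] u = u

/-- The digit-square-sum part of `S`. -/
def Fs (b x : ℕ) : ℕ := ((Nat.digits b x).map (· ^ 2)).sum

lemma Fs_eq (b x : ℕ) (hb : 2 ≤ b) (hx : 0 < x) :
    Fs b x = (x % b) ^ 2 + Fs b (x / b) := by
  unfold Fs
  rw [Nat.digits_def' (by omega : 1 < b) hx]
  simp

lemma Fs_step (b x : ℕ) (hb : 2 ≤ b) : Fs b x ≤ b ^ 2 + Fs b (x / b) := by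
  rcases Nat.eq_zero_or_pos x with h | h
  · subst h; simp [Fs]
  · rw [Fs_eq b x hb h]
    have : x % b < b := Nat.mod_lt _ (by omega)
    have : (x % b) ^ 2 ≤ b ^ 2 := Nat.pow_le_pow_left (by omega) 2
    omega

lemma Fs_le_one (b x : ℕ) (hb : 2 ≤ b) (hx : x ≤ 1) : Fs b x ≤ 1 := by
  interval_cases x
  · simp [Fs]
  · unfold Fs
    rw [Nat.digits_def' (by omega : 1 < b) (by omega)]
    have h1 : 1 % b = 1 := Nat.mod_eq_of_lt (by omega)
    have h2 : 1 / b = 0 := Nat.div_eq_of_lt (by omega)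
    rw [h1, h2]
    simp

lemma Fs_pos (b : ℕ) (hb : 2 ≤ b) : ∀ x, 0 < x → 0 < Fs b x := by
  intro x
  induction x using Nat.strong_induction_on with
  | _ x ih =>
    intro hx
    rw [Fs_eq b x hb hx]
    rcases Nat.eq_zero_or_pos (x % b) with h | h
    · have hxb : b ≤ x := by
        by_contra hlt
        push_neg at hlt
        rw [Nat.mod_eq_of_lt hlt] at h
        omega
      have hq : 0 < x / b := Nat.div_pos hxb (by omega)
      have := ih (x / b) (Nat.div_lt_self hx (by omega)) hq
      omega
    · positivity

lemma Fs_bound (b : ℕ) (hb : 2 ≤ b) : ∀ x, Fs b x ≤ x / 2 + 4 * b ^ 2 := by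
  intro x
  induction x using Nat.strong_induction_on with
  | _ x ih =>
    by_cases hsmall : x < 2 * (b * b * b)
    · -- small case: three steps reach ≤ 1
      have h1 := Fs_step b x hb
      have h2 := Fs_step b (x / b) hb
      have h3 := Fs_step b (x / b / b) hb
      have hdd : x / b / b / b = x / (b * b * b) := by
        rw [Nat.div_div_eq_div_mul, Nat.div_div_eq_div_mul, mul_assoc]
      have hle1 : x / (b * b * b) ≤ 1 := by
        have : x / (b * b * b) < 2 :=
          (Nat.div_lt_iff_lt_mul (by positivity)).mpr (by omega)
        omega
      have h4 : Fs b (x / b / b / b) ≤ 1 := by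
        rw [hdd]; exact Fs_le_one b _ hb hle1
      have hb2 : 4 ≤ b ^ 2 := by nlinarith
      omega
    · push_neg at hsmall
      have hx : 0 < x := by nlinarith
      rw [Fs_eq b x hb hx]
      have hq : x / b < x := Nat.div_lt_self hx (by omega)
      have ih' := ih (x / b) hq
      have hA : (x % b) ^ 2 ≤ b ^ 2 := by
        have : x % b < b := Nat.mod_lt _ (by omega)
        exact Nat.pow_le_pow_left (by omega) 2
      have hq2 : 2 * b ^ 2 ≤ x / b := by
        rw [Nat.le_div_iff_mul_le (by omega : 0 < b)]
        nlinarith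
      have hqx : 2 * (x / b) ≤ x := by
        have := Nat.div_mul_le_self x b
        nlinarith [Nat.div_mul_le_self x b]
      omega

lemma S_pos (c b : ℕ) (hb : 2 ≤ b) (x : ℕ) (hx : 0 < x) : 0 < S c b x := by
  have := Fs_pos b hb x hx
  unfold S
  unfold Fs at this
  omega

lemma S_iter_pos (c b : ℕ) (hb : 2 ≤ b) (a : ℕ) (ha : 0 < a) :
    ∀ n, 0 < (S c b)^[n] a := by
  intro n
  induction n with
  | zero => simpa
  | succ n ih =>
    rw [Function.iterate_succ_apply']
    exact S_pos c b hb _ ih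

theorem stmt_19 (c b : ℕ) (hb : 2 ≤ b)
    (honecycle : ∀ u u' m m' : ℕ, 0 < u → 0 < u' → 0 < m → 0 < m' →
      (S c b)^[m] u = u → (S c b)^[m'] u' = u' → ∃ j : ℕ, u' = (S c b)^[j] u) :
    ∀ u, inU c b u → ∀ a : ℕ, 0 < a → ∃ k : ℕ, (S c b)^[k] a = u := by
  rintro u ⟨hu, m, hm, hum⟩ a ha
  set B : ℕ := a + 2 * c + 8 * b ^ 2 + 2 with hBdef
  have hbound : ∀ n, (S c b)^[n] a ≤ B := by
    intro n
    induction n with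
    | zero => simp only [Function.iterate_zero, id]; omega
    | succ n ih =>
      rw [Function.iterate_succ_apply']
      set x := (S c b)^[n] a
      have hF : Fs b x ≤ x / 2 + 4 * b ^ 2 := Fs_bound b hb x
      have hS : S c b x = c + Fs b x := rfl
      omega
  -- pigeonhole: the orbit repeats
  have hpig : ∃ i j : ℕ, i < j ∧ (S c b)^[i] a = (S c b)^[j] a := by
    obtain ⟨i, j, hne, hij⟩ :=
      Finite.exists_ne_map_eq_of_infinite
        (fun n : ℕ => (⟨(S c b)^[n] a, Nat.lt_succ_of_le (hbound n)⟩ : Fin (B + 1)))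
    have heq : (S c b)^[i] a = (S c b)^[j] a := by
      simpa [Fin.mk.injEq] using hij
    rcases Nat.lt_or_ge i j with h | h
    · exact ⟨i, j, h, heq⟩
    · exact ⟨j, i, lt_of_le_of_ne h (Ne.symm hne), heq.symm⟩
  obtain ⟨i, j, hij, heq⟩ := hpig
  set u' := (S c b)^[i] a with hu'def
  have hu'pos : 0 < u' := S_iter_pos c b hb a ha i
  have hper : (S c b)^[j - i] u' = u' := by
    rw [hu'def, ← Function.iterate_add_apply]
    have : j - i + i = j := by omega
    rw [this, ← heq]
  obtain ⟨j', hj'⟩ := honecycle u' u (j - i) m hu'pos hu (by omega) hm hper hum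
  refine ⟨j' + i, ?_⟩
  rw [Function.iterate_add_apply, ← hu'def, ← hj']
end
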